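/- arXiv:2508.05455 — 12 statements merged into one kernel-verified Lean document; each statement's English description precedes it below -/
import Mathlib

section
/- Let p be a prime and let R be a ring with exactly p² elements such that p•x = 0 for every x ∈ R. Then the following are equivalent: (i) R is the union of some finite family of proper two-sided ideals; (ii) every additive subgroup of R of order p is a two-sided ideal of R. Moreover, if these hold, then R is the union of p + 1 proper two-sided ideals, and R is not the union of any p proper two-sided ideals. -/
/-- A left ideal of a (possibly non-unital, non-commutative) ring `R`:
an additive subgroup closed under left multiplication by arbitrary ring elements. -/
def IsLeftIdeal {R : Type*} [NonUnitalRing R] (I : AddSubgroup R) : Prop :=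
  ∀ (r : R) ⦃x : R⦄, x ∈ I → r * x ∈ I

/-- A right ideal of a (possibly non-unital, non-commutative) ring `R`:
an additive subgroup closed under right multiplication by arbitrary ring elements. -/
def IsRightIdeal {R : Type*} [NonUnitalRing R] (I : AddSubgroup R) : Prop :=
  ∀ (r : R) ⦃x : R⦄, x ∈ I → x * r ∈ I

/-- A two-sided ideal: both a left and a right ideal. -/
def IsTwoSidedIdeal {R : Type*} [NonUnitalRing R] (I : AddSubgroup R) : Prop :=
  IsLeftIdeal I ∧ IsRightIdeal I

section Aux
variable {p : ℕ} {R : Type*} [NonUnitalRing R]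

lemma aux_le_of_le [Finite R] {H K : AddSubgroup R} (h : H ≤ K) : Nat.card H ≤ Nat.card K := by
  simpa [← Nat.card_coe_set_eq] using Set.ncard_le_ncard h (Set.toFinite _)

lemma aux_eq_of_le [Finite R] {H K : AddSubgroup R} (h : H ≤ K)
    (h2 : Nat.card K ≤ Nat.card H) : H = K := by
  apply SetLike.ext'
  exact Set.eq_of_subset_of_ncard_le h (by simpa [← Nat.card_coe_set_eq] using h2)
    (Set.toFinite _)

lemma aux_order (hp : p.Prime) (hchar : ∀ x : R, p • x = 0) {x : R} (hx : x ≠ 0) :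
    addOrderOf x = p := by
  have h := addOrderOf_dvd_of_nsmul_eq_zero (hchar x)
  rcases (hp.eq_one_or_self_of_dvd _ h) with h1 | h1
  · exact absurd (AddMonoid.addOrderOf_eq_one_iff.mp h1) hx
  · exact h1

lemma aux_card_zmul (hp : p.Prime) (hchar : ∀ x : R, p • x = 0) {x : R} (hx : x ≠ 0) :
    Nat.card (AddSubgroup.zmultiples x) = p := by
  rw [Nat.card_zmultiples, aux_order hp hchar hx]

/-- a subgroup of order `p` containing the nonzero `x` is `zmultiples x` -/
lemma aux_eq_zmul [Finite R] (hp : p.Prime) (hchar : ∀ x : R, p • x = 0)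
    {I : AddSubgroup R} (hI : Nat.card I = p) {x : R} (hxI : x ∈ I) (hx : x ≠ 0) :
    I = AddSubgroup.zmultiples x := by
  refine (aux_eq_of_le ?_ ?_).symm
  · rwa [AddSubgroup.zmultiples_le]
  · rw [hI, aux_card_zmul hp hchar hx]

lemma aux_exists_ne_zero (hp : p.Prime) {I : AddSubgroup R} (hI : Nat.card I = p) :
    ∃ x ∈ I, x ≠ 0 := by
  by_contra h
  push_neg at h
  have : I = ⊥ := by
    apply le_antisymm _ bot_le
    intro y hy
    simpa using h y hy
  rw [this] at hI
  simp only [AddSubgroup.card_bot] at hI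
  exact hp.one_lt.ne hI

lemma aux_proper_card [Finite R] (hp : p.Prime) (hcard : Nat.card R = p ^ 2)
    {I : AddSubgroup R} (hI : I ≠ ⊤) : Nat.card I = 1 ∨ Nat.card I = p := by
  have hdvd : Nat.card I ∣ p ^ 2 := hcard ▸ AddSubgroup.card_addSubgroup_dvd_card I
  obtain ⟨k, hk, hIk⟩ := (Nat.dvd_prime_pow hp).mp hdvd
  interval_cases k
  · left; simpa using hIk
  · right; simpa using hIk
  · exact absurd (AddSubgroup.eq_top_of_card_eq I (by rw [hIk, hcard])) hI

lemma aux_ne_top [Finite R] (hp : p.Prime) (hcard : Nat.card R = p ^ 2)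
    {I : AddSubgroup R} (hI : Nat.card I = p) : I ≠ ⊤ := by
  intro h
  rw [h] at hI
  have : Nat.card (⊤ : AddSubgroup R) = Nat.card R :=
    Nat.card_congr AddSubgroup.topEquiv.toEquiv
  rw [this, hcard] at hI
  have := hp.two_le
  nlinarith
end Aux

/-- For a ring `R` of order `p²` (with `p • x = 0` for all `x`), being a union of
finitely many proper two-sided ideals is equivalent to every additive subgroup of
order `p` being a two-sided ideal; and in that case `R` is the union of `p + 1`
proper two-sided ideals but not of any `p` proper two-sided ideals. -/
theorem two_sided_ideal_cover_of_order_p_sq (p : ℕ) (hp : p.Prime)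
    (R : Type*) [NonUnitalRing R] (hcard : Nat.card R = p ^ 2)
    (hchar : ∀ x : R, p • x = 0) :
    ((∃ (n : ℕ) (f : Fin n → AddSubgroup R),
        (∀ i, IsTwoSidedIdeal (f i) ∧ f i ≠ ⊤) ∧ ∀ x : R, ∃ i, x ∈ f i) ↔
      (∀ I : AddSubgroup R, Nat.card I = p → IsTwoSidedIdeal I)) ∧
    ((∀ I : AddSubgroup R, Nat.card I = p → IsTwoSidedIdeal I) →
      (∃ f : Fin (p + 1) → AddSubgroup R,
        (∀ i, IsTwoSidedIdeal (f i) ∧ f i ≠ ⊤) ∧ ∀ x : R, ∃ i, x ∈ f i) ∧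
      ¬ ∃ f : Fin p → AddSubgroup R,
        (∀ i, IsTwoSidedIdeal (f i) ∧ f i ≠ ⊤) ∧ ∀ x : R, ∃ i, x ∈ f i) := by
  classical
  have hfin : Finite R := Nat.finite_of_card_ne_zero (by
    rw [hcard]; exact pow_ne_zero _ hp.pos.ne')
  have := Fintype.ofFinite R
  have hp2 := hp.two_le
  -- the "lines": cyclic subgroups generated by nonzero elements
  set N : Finset R := Finset.univ.erase (0 : R) with hN
  set lines : Finset (AddSubgroup R) := N.image (fun x => AddSubgroup.zmultiples x) with hL
  have hNcard : N.card = p ^ 2 - 1 := by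
    rw [hN, Finset.card_erase_of_mem (Finset.mem_univ _), Finset.card_univ,
      ← Nat.card_eq_fintype_card, hcard]
  have hline_card : ∀ b ∈ lines, Nat.card b = p := by
    intro b hb
    obtain ⟨x, hx, rfl⟩ := Finset.mem_image.mp hb
    have hx0 : x ≠ 0 := (Finset.mem_erase.mp hx).1
    exact aux_card_zmul hp hchar hx0
  have hfib : ∀ b ∈ lines,
      (N.filter (fun x => AddSubgroup.zmultiples x = b)).card = p - 1 := by
    intro b hb
    have hbp := hline_card b hb
    have hfeq : N.filter (fun x => AddSubgroup.zmultiples x = b)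
        = (b : Set R).toFinset.erase 0 := by
      ext y
      simp only [Finset.mem_filter, hN, Finset.mem_erase, Finset.mem_univ, true_and,
        Set.mem_toFinset, SetLike.mem_coe, and_true]
      constructor
      · rintro ⟨hy0, rfl⟩
        exact ⟨hy0, AddSubgroup.mem_zmultiples y⟩
      · rintro ⟨hy0, hyb⟩
        exact ⟨hy0, (aux_eq_zmul hp hchar hbp hyb hy0).symm⟩
    rw [hfeq, Finset.card_erase_of_mem (by simp [AddSubgroup.zero_mem]), Set.toFinset_card]
    rw [← Nat.card_eq_fintype_card]
    rw [show Nat.card (b : Set R) = Nat.card b from rfl, hbp]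
  have hsum := Finset.card_eq_sum_card_fiberwise
    (f := fun x => AddSubgroup.zmultiples x) (s := N) (t := lines)
    (fun x hx => Finset.mem_image_of_mem _ hx)
  have hlines_card : lines.card = p + 1 := by
    have h1 : N.card = lines.card * (p - 1) := by
      rw [hsum, Finset.sum_congr rfl hfib, Finset.sum_const, smul_eq_mul]
    rw [hNcard] at h1
    have h2 : (p + 1) * (p - 1) = p ^ 2 - 1 := by
      simpa using (Nat.sq_sub_sq p 1).symm
    have hpos : 0 < p - 1 := by omega
    exact Nat.eq_of_mul_eq_mul_right hpos (by rw [← h1, h2])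
  -- the cover by p+1 lines
  have main : (∀ I : AddSubgroup R, Nat.card I = p → IsTwoSidedIdeal I) →
      ∃ f : Fin (p + 1) → AddSubgroup R,
        (∀ i, IsTwoSidedIdeal (f i) ∧ f i ≠ ⊤) ∧ ∀ x : R, ∃ i, x ∈ f i := by
    intro hIdeal
    refine ⟨fun i => (lines.equivFin.symm (Fin.cast hlines_card.symm i) : lines), ?_, ?_⟩
    · intro i
      set b := lines.equivFin.symm (Fin.cast hlines_card.symm i)
      have hb := hline_card b b.2
      exact ⟨hIdeal _ hb, aux_ne_top hp hcard hb⟩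
    · intro x
      by_cases hx : x = 0
      · subst hx
        exact ⟨0, AddSubgroup.zero_mem _⟩
      · have hmem : AddSubgroup.zmultiples x ∈ lines :=
          Finset.mem_image_of_mem _ (by simp [hN, hx])
        refine ⟨Fin.cast hlines_card (lines.equivFin ⟨_, hmem⟩), ?_⟩
        have : lines.equivFin.symm (Fin.cast hlines_card.symm
            (Fin.cast hlines_card (lines.equivFin ⟨_, hmem⟩))) = ⟨_, hmem⟩ := by
          simp
        show x ∈ (lines.equivFin.symm (Fin.cast hlines_card.symm
            (Fin.cast hlines_card (lines.equivFin ⟨_, hmem⟩))) : AddSubgroup R)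
        rw [this]
        exact AddSubgroup.mem_zmultiples x
  refine ⟨⟨?_, fun h => ⟨p + 1, main h⟩⟩, fun h => ⟨main h, ?_⟩⟩
  · -- forward direction of the iff
    rintro ⟨n, f, hf, hcov⟩ I hI
    obtain ⟨x, hxI, hx0⟩ := aux_exists_ne_zero hp hI
    obtain ⟨i, hxi⟩ := hcov x
    have hle : AddSubgroup.zmultiples x ≤ f i := by rwa [AddSubgroup.zmultiples_le]
    have hge : p ≤ Nat.card (f i) := by
      rw [← aux_card_zmul hp hchar hx0]
      exact aux_le_of_le hle
    have hfi : Nat.card (f i) = p := by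
      rcases aux_proper_card hp hcard (hf i).2 with h | h
      · omega
      · exact h
    have : f i = I := by
      rw [aux_eq_zmul hp hchar hfi hxi hx0, ← aux_eq_zmul hp hchar hI hxI hx0]
    exact this ▸ (hf i).1
  · -- no cover by p proper ideals
    rintro ⟨f, hf, hcov⟩
    have hsub : N ⊆ Finset.univ.biUnion
        (fun i : Fin p => ((f i : Set R).toFinset.erase 0)) := by
      intro y hy
      obtain ⟨i, hi⟩ := hcov y
      refine Finset.mem_biUnion.mpr ⟨i, Finset.mem_univ _, ?_⟩
      simp only [Finset.mem_erase, Set.mem_toFinset, SetLike.mem_coe]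
      exact ⟨(Finset.mem_erase.mp hy).1, hi⟩
    have hbound : ∀ i : Fin p, ((f i : Set R).toFinset.erase 0).card ≤ p - 1 := by
      intro i
      have hcardle : Nat.card (f i) ≤ p := by
        rcases aux_proper_card hp hcard (hf i).2 with h | h <;> omega
      have : (f i : Set R).toFinset.card ≤ p := by
        rw [Set.toFinset_card, ← Nat.card_eq_fintype_card]
        exact hcardle
      have h0 : (0 : R) ∈ (f i : Set R).toFinset := by simp [AddSubgroup.zero_mem]
      rw [Finset.card_erase_of_mem h0]
      omega
    have hle : N.card ≤ p * (p - 1) := by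
      calc N.card ≤ (Finset.univ.biUnion
          (fun i : Fin p => ((f i : Set R).toFinset.erase 0))).card :=
            Finset.card_le_card hsub
        _ ≤ ∑ i : Fin p, ((f i : Set R).toFinset.erase 0).card := Finset.card_biUnion_le
        _ ≤ ∑ _i : Fin p, (p - 1) := Finset.sum_le_sum (fun i _ => hbound i)
        _ = p * (p - 1) := by simp [Finset.sum_const, mul_comm]
    rw [hNcard] at hle
    have e1 : p * (p - 1) = p ^ 2 - p := by rw [Nat.mul_sub, mul_one, pow_two]
    have e2 : p ≤ p ^ 2 := Nat.le_self_pow two_ne_zero p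
    rw [e1] at hle
    omega
end

section
/- Let p be a prime and let R be a ring with exactly p² elements such that p•x = 0 for every x ∈ R and x·y = 0 for all x, y ∈ R. Then R is the union of p + 1 proper two-sided ideals, and R is not the union of any p proper two-sided ideals. -/
/-- Auxiliary: the `ZMod p`-module structure, wrapped in a definition so that
typeclass unification does not unfold the underlying `match`. -/
def zmodModuleAux (p : ℕ) (V : Type*) [AddCommGroup V] (h : ∀ x : V, p • x = 0) :
    Module (ZMod p) V := AddCommGroup.zmodModule h

lemma aux_cover (p : ℕ) (hp : p.Prime) (V : Type*) [AddCommGroup V]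
    (hcard : Nat.card V = p ^ 2) (hchar : ∀ x : V, p • x = 0) :
    (∃ f : Fin (p + 1) → AddSubgroup V, (∀ i, f i ≠ ⊤) ∧ ∀ x : V, ∃ i, x ∈ f i) ∧
    ¬ ∃ f : Fin p → AddSubgroup V, (∀ i, f i ≠ ⊤) ∧ ∀ x : V, ∃ i, x ∈ f i := by
  haveI : Fact p.Prime := ⟨hp⟩
  haveI : NeZero p := ⟨hp.pos.ne'⟩
  have hfin : Finite V := Nat.finite_of_card_ne_zero (by
    rw [hcard]; exact pow_ne_zero 2 hp.pos.ne')
  letI : Module (ZMod p) V := zmodModuleAux p V hchar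
  haveI : Module.Finite (ZMod p) V := Module.Finite.of_finite
  haveI : Fintype V := Fintype.ofFinite V
  have hfc : Fintype.card V = p ^ 2 := by rw [← Nat.card_eq_fintype_card, hcard]
  have hrank : Module.finrank (ZMod p) V = 2 := by
    have := Module.card_eq_pow_finrank (K := ZMod p) (V := V)
    rw [ZMod.card, hfc] at this
    exact (Nat.pow_right_injective hp.two_le this.symm)
  haveI hFree : Module.Free (ZMod p) V := by infer_instance
  obtain ⟨b⟩ : Nonempty (Module.Basis (Fin 2) (ZMod p) V) :=
    ⟨Module.finBasisOfFinrankEq (R := ZMod p) (M := V) hrank⟩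
  constructor
  · -- existence of covering by p+1 proper subgroups
    set g : Fin (p + 1) → Submodule (ZMod p) V := fun i =>
      if (i : ℕ) < p then Submodule.span (ZMod p) {b 0 + ((i : ℕ) : ZMod p) • b 1}
      else Submodule.span (ZMod p) {b 1} with hg
    refine ⟨fun i => (g i).toAddSubgroup, fun i => ?_, fun x => ?_⟩
    · -- properness
      have hspan : ∀ y : V, Submodule.span (ZMod p) {y} ≠ ⊤ := by
        intro y hy
        have h1 : Module.finrank (ZMod p) ↥(Submodule.span (ZMod p) ({y} : Set V)) ≤ 1 := by
          simpa using finrank_span_le_card ({y} : Set V)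
        rw [hy, finrank_top, hrank] at h1
        omega
      intro htop
      have hgt : g i = ⊤ := by
        apply Submodule.toAddSubgroup_injective (R := ZMod p)
        exact htop
      rw [hg] at hgt
      dsimp only at hgt
      split_ifs at hgt <;> exact hspan _ hgt
    · -- covering
      have hx : b.repr x 0 • b 0 + b.repr x 1 • b 1 = x := by
        have := b.sum_repr x
        rwa [Fin.sum_univ_two] at this
      by_cases ha : b.repr x 0 = 0
      · refine ⟨Fin.last p, ?_⟩
        have hnl : ¬ ((Fin.last p : ℕ) < p) := by simp
        simp only [hg, hnl, if_false, Submodule.mem_toAddSubgroup]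
        rw [← hx, ha, zero_smul, zero_add]
        exact Submodule.smul_mem _ _ (Submodule.mem_span_singleton_self _)
      · set a := b.repr x 0 with hadef
        set c := b.repr x 1 with hcdef
        set t := c / a with ht
        refine ⟨⟨t.val, by have := t.val_lt; omega⟩, ?_⟩
        have hlt : ((⟨t.val, by have := t.val_lt; omega⟩ : Fin (p+1)) : ℕ) < p := t.val_lt
        simp only [hg, hlt, if_true, Submodule.mem_toAddSubgroup]
        have hcast : ((t.val : ℕ) : ZMod p) = t := by
          rw [ZMod.natCast_val, ZMod.cast_id]
        rw [Submodule.mem_span_singleton]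
        refine ⟨a, ?_⟩
        rw [hcast, smul_add, smul_smul, ht, mul_div_cancel₀ c ha, hx]
  · -- impossibility with p subgroups
    classical
    rintro ⟨f, hf, hcov⟩
    have hle : ∀ i, Nat.card (f i) ≤ p := by
      intro i
      have hdvd : Nat.card (f i) ∣ p ^ 2 := hcard ▸ AddSubgroup.card_addSubgroup_dvd_card (f i)
      obtain ⟨k, hk, hek⟩ := (Nat.dvd_prime_pow hp).mp hdvd
      have hne : Nat.card (f i) ≠ p ^ 2 := fun h =>
        (hf i) (AddSubgroup.eq_top_of_card_eq _ (h.trans hcard.symm))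
      interval_cases k
      · simpa using hek.le.trans hp.one_le
      · simpa using hek.le
      · exact absurd hek hne
    have hT : ∀ i, ((f i : Set V).toFinset).card ≤ p := by
      intro i
      rw [Set.toFinset_card]
      have h4 : Fintype.card (f i : Set V) = Nat.card (f i) := by
        rw [Nat.card_eq_fintype_card]; rfl
      rw [h4]; exact hle i
    have h0 : ∀ i, (0:V) ∈ f i := fun i => (f i).zero_mem
    have hsub : (Finset.univ.erase (0:V)) ⊆
        Finset.univ.biUnion (fun i : Fin p => ((f i : Set V).toFinset).erase 0) := by
      intro x hx
      obtain ⟨i, hi⟩ := hcov x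
      simp only [Finset.mem_erase, Finset.mem_univ, and_true] at hx
      exact Finset.mem_biUnion.mpr ⟨i, Finset.mem_univ i,
        Finset.mem_erase.mpr ⟨hx, Set.mem_toFinset.mpr hi⟩⟩
    have hcount := (Finset.card_le_card hsub).trans Finset.card_biUnion_le
    have h1 : (Finset.univ.erase (0:V)).card = p^2 - 1 := by
      rw [Finset.card_erase_of_mem (Finset.mem_univ _), Finset.card_univ, hfc]
    have h2 : ∀ i : Fin p, ((f i : Set V).toFinset.erase 0).card ≤ p - 1 := by
      intro i
      have h3 := hT i
      have h5 : ((f i:Set V).toFinset.erase 0).card = (f i:Set V).toFinset.card - 1 :=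
        Finset.card_erase_of_mem (Set.mem_toFinset.mpr (h0 i))
      omega
    have hsum : ∑ i : Fin p, ((f i : Set V).toFinset.erase 0).card ≤ p * (p-1) :=
      (Finset.sum_le_sum (fun i _ => h2 i)).trans (by
        rw [Finset.sum_const, Finset.card_univ, Fintype.card_fin, smul_eq_mul])
    have hpp : p * (p - 1) = p * p - p := by rw [Nat.mul_sub, Nat.mul_one]
    have hsq : p ^ 2 = p * p := sq p
    have hplep : p ≤ p * p := Nat.le_mul_of_pos_left p hp.pos
    have hp2 := hp.two_le
    rw [h1] at hcount
    have hfin2 : p ^ 2 - 1 ≤ p * (p - 1) := hcount.trans hsum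
    rw [hpp, hsq] at hfin2
    set N := p * p with hN
    omega

/-- A ring of order `p²` with `p • x = 0` for all `x` and zero multiplication is
the union of `p + 1` proper two-sided ideals, but not of any `p` proper
two-sided ideals. -/
theorem zero_mul_ring_ideal_covering_number (p : ℕ) (hp : p.Prime)
    (R : Type*) [NonUnitalRing R] (hcard : Nat.card R = p ^ 2)
    (hchar : ∀ x : R, p • x = 0) (hmul : ∀ x y : R, x * y = 0) :
    (∃ f : Fin (p + 1) → AddSubgroup R,
      (∀ i, IsTwoSidedIdeal (f i) ∧ f i ≠ ⊤) ∧ ∀ x : R, ∃ i, x ∈ f i) ∧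
    ¬ ∃ f : Fin p → AddSubgroup R,
      (∀ i, IsTwoSidedIdeal (f i) ∧ f i ≠ ⊤) ∧ ∀ x : R, ∃ i, x ∈ f i := by
  have hideal : ∀ I : AddSubgroup R, IsTwoSidedIdeal I := fun I =>
    ⟨fun r x hx => by rw [hmul]; exact I.zero_mem,
     fun r x hx => by rw [hmul]; exact I.zero_mem⟩
  obtain ⟨⟨f, hf1, hf2⟩, hneg⟩ := aux_cover p hp R hcard hchar
  refine ⟨⟨f, fun i => ⟨hideal _, hf1 i⟩, hf2⟩, ?_⟩
  rintro ⟨g, hg1, hg2⟩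
  exact hneg ⟨g, fun i => (hg1 i).2, hg2⟩
end

section
/- Let p be a prime and let R be a ring with exactly p² elements containing elements a, b such that p•a = 0, p•b = 0, the additive group of R is generated by a and b, and a² = a, b² = b, ab = b, ba = a. Then R is the union of p + 1 proper left ideals, and R is not the union of any p proper left ideals. -/
section Aux
variable {R : Type*} [NonUnitalRing R] (a b : R)

lemma R2_mul_eq (hgen : AddSubgroup.closure {a, b} = ⊤)
    (haa : a * a = a) (hbb : b * b = b) (hab : a * b = b) (hba : b * a = a) :
    ∀ x y : R, ∃ k : ℤ, x * y = k • y := by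
  have hay : ∀ y : R, a * y = y := by
    intro y
    have hy : y ∈ AddSubgroup.closure ({a, b} : Set R) := hgen ▸ AddSubgroup.mem_top y
    induction hy using AddSubgroup.closure_induction with
    | mem z hz => rcases hz with rfl | rfl
                  · exact haa
                  · exact hab
    | zero => exact mul_zero a
    | add u v hu hv ihu ihv => rw [mul_add, ihu, ihv]
    | neg u hu ihu => rw [mul_neg, ihu]
  have hby : ∀ y : R, b * y = y := by
    intro y
    have hy : y ∈ AddSubgroup.closure ({a, b} : Set R) := hgen ▸ AddSubgroup.mem_top y
    induction hy using AddSubgroup.closure_induction with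
    | mem z hz => rcases hz with rfl | rfl
                  · exact hba
                  · exact hbb
    | zero => exact mul_zero b
    | add u v hu hv ihu ihv => rw [mul_add, ihu, ihv]
    | neg u hu ihu => rw [mul_neg, ihu]
  intro x y
  have hx : x ∈ AddSubgroup.closure ({a, b} : Set R) := hgen ▸ AddSubgroup.mem_top x
  induction hx using AddSubgroup.closure_induction with
  | mem z hz => rcases hz with rfl | rfl
                · exact ⟨1, by rw [hay, one_zsmul]⟩
                · exact ⟨1, by rw [hby, one_zsmul]⟩
  | zero => exact ⟨0, by rw [zero_mul, zero_zsmul]⟩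
  | add u v hu hv ihu ihv =>
      obtain ⟨k, hk⟩ := ihu; obtain ⟨l, hl⟩ := ihv
      exact ⟨k + l, by rw [add_mul, hk, hl, add_zsmul]⟩
  | neg u hu ihu =>
      obtain ⟨k, hk⟩ := ihu
      exact ⟨-k, by rw [neg_mul, hk, neg_zsmul]⟩

lemma R2_decomp (hgen : AddSubgroup.closure {a, b} = ⊤) :
    ∀ x : R, ∃ m n : ℤ, x = m • a + n • b := by
  intro x
  have hx : x ∈ AddSubgroup.closure ({a, b} : Set R) := hgen ▸ AddSubgroup.mem_top x
  induction hx using AddSubgroup.closure_induction with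
  | mem z hz => rcases hz with rfl | rfl
                · exact ⟨1, 0, by simp⟩
                · exact ⟨0, 1, by simp⟩
  | zero => exact ⟨0, 0, by simp⟩
  | add u v hu hv ihu ihv =>
      obtain ⟨m, n, hm⟩ := ihu; obtain ⟨m', n', hm'⟩ := ihv
      exact ⟨m + m', n + n', by rw [hm, hm', add_zsmul, add_zsmul]; abel⟩
  | neg u hu ihu =>
      obtain ⟨m, n, hm⟩ := ihu
      exact ⟨-m, -n, by rw [hm, neg_zsmul, neg_zsmul, neg_add]⟩

end Aux

/-- The ring `R₂` of order `p²` with presentation `a² = a, b² = b, ab = b, ba = a`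
is the union of `p + 1` proper left ideals, but not of any `p` proper left ideals. -/
theorem left_ideal_covering_number_of_R2 (p : ℕ) (hp : p.Prime)
    (R : Type*) [NonUnitalRing R] (hcard : Nat.card R = p ^ 2) (a b : R)
    (ha : p • a = 0) (hb : p • b = 0) (hgen : AddSubgroup.closure {a, b} = ⊤)
    (haa : a * a = a) (hbb : b * b = b) (hab : a * b = b) (hba : b * a = a) :
    (∃ f : Fin (p + 1) → AddSubgroup R,
      (∀ i, IsLeftIdeal (f i) ∧ f i ≠ ⊤) ∧ ∀ x : R, ∃ i, x ∈ f i) ∧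
    ¬ ∃ f : Fin p → AddSubgroup R,
      (∀ i, IsLeftIdeal (f i) ∧ f i ≠ ⊤) ∧ ∀ x : R, ∃ i, x ∈ f i := by
  classical
  haveI : Fact p.Prime := ⟨hp⟩
  have hp2 : 2 ≤ p := hp.two_le
  haveI : Finite R := Nat.finite_of_card_ne_zero (by rw [hcard]; positivity)
  have hmul := R2_mul_eq a b hgen haa hbb hab hba
  -- every additive subgroup is a left ideal
  have hLI : ∀ I : AddSubgroup R, IsLeftIdeal I := by
    intro I r x hx
    obtain ⟨k, hk⟩ := hmul r x
    rw [hk]; exact AddSubgroup.zsmul_mem I hx k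
  have hdecomp := R2_decomp a b hgen
  have hza : (p : ℤ) • a = 0 := by rw [natCast_zsmul]; exact ha
  have hzb : (p : ℤ) • b = 0 := by rw [natCast_zsmul]; exact hb
  have hkill : ∀ (g : R), (p : ℤ) • g = 0 → ∀ m : ℤ, (p : ℤ) ∣ m → m • g = 0 := by
    rintro g hg m ⟨q, rfl⟩
    rw [mul_comm, mul_zsmul, hg, smul_zero]
  -- properness of zmultiples of p-torsion elements
  have hproper : ∀ g : R, p • g = 0 → AddSubgroup.zmultiples g ≠ ⊤ := by
    intro g hg htop
    have h1 : Nat.card (AddSubgroup.zmultiples g) = addOrderOf g := Nat.card_zmultiples g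
    have h2 : addOrderOf g ∣ p := addOrderOf_dvd_of_nsmul_eq_zero hg
    have h3 : addOrderOf g ≤ p := Nat.le_of_dvd hp.pos h2
    have h4 : Nat.card (AddSubgroup.zmultiples g) = p ^ 2 := by
      rw [htop]; rw [← hcard]; exact Nat.card_congr AddSubgroup.topEquiv.toEquiv
    have : p ^ 2 ≤ p := by rw [← h4, h1]; exact h3
    nlinarith
  constructor
  · -- the covering by p + 1 proper left ideals
    refine ⟨fun i => AddSubgroup.zmultiples (if (i : ℕ) < p then a + (i : ℕ) • b else b),
      fun i => ⟨hLI _, ?_⟩, fun x => ?_⟩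
    · apply hproper
      split
      · rw [smul_add, ha, smul_comm, hb, smul_zero, add_zero]
      · exact hb
    · obtain ⟨m, n, rfl⟩ := hdecomp x
      by_cases hm0 : (m : ZMod p) = 0
      · refine ⟨Fin.last p, ?_⟩
        dsimp only
        have hnl : ¬ ((Fin.last p : ℕ) < p) := by simp
        rw [if_neg hnl, AddSubgroup.mem_zmultiples_iff]
        refine ⟨n, ?_⟩
        have hma : m • a = 0 :=
          hkill a hza m ((ZMod.intCast_zmod_eq_zero_iff_dvd m p).mp hm0)
        rw [hma, zero_add]
      · set c : ZMod p := (n : ZMod p) * (m : ZMod p)⁻¹ with hc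
        refine ⟨⟨c.val, c.val_lt.trans (Nat.lt_succ_self p)⟩, ?_⟩
        dsimp only
        rw [if_pos c.val_lt, AddSubgroup.mem_zmultiples_iff]
        refine ⟨m, ?_⟩
        have hmc : (m : ZMod p) * c = (n : ZMod p) := by
          rw [hc, mul_left_comm, mul_inv_cancel₀ hm0, mul_one]
        have key : (p : ℤ) ∣ n - m * (c.val : ℤ) := by
          rw [← ZMod.intCast_zmod_eq_zero_iff_dvd]
          push_cast
          rw [ZMod.natCast_val, ZMod.cast_id, hmc, sub_self]
        have hz : (n - m * (c.val : ℤ)) • b = 0 := hkill b hzb _ key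
        have heq : (n : ℤ) • b = (m * (c.val : ℤ)) • b := by
          rw [sub_zsmul, ← sub_eq_add_neg] at hz
          exact sub_eq_zero.mp hz
        have hcast : (c.val : ℕ) • b = (c.val : ℤ) • b := by norm_cast
        rw [smul_add, hcast, smul_smul, ← heq]
  · rintro ⟨f, hf, hcover⟩
    haveI : Fintype R := Fintype.ofFinite R
    -- each f i has at most p elements
    have hcardle : ∀ i, Nat.card (f i) ≤ p := by
      intro i
      have hdvd : Nat.card (f i) ∣ p ^ 2 := hcard ▸ AddSubgroup.card_addSubgroup_dvd_card (f i)
      obtain ⟨k, hk2, hkeq⟩ := (Nat.dvd_prime_pow hp).mp hdvd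
      interval_cases k
      · rw [hkeq]; exact hp.one_lt.le.trans' (by norm_num)
      · rw [hkeq, pow_one]
      · exfalso
        exact (hf i).2 (AddSubgroup.eq_top_of_card_eq _ (by rw [hkeq, hcard]))
    set S : Fin p → Finset R := fun i => (f i : Set R).toFinset with hS
    have hScard : ∀ i, (S i).card ≤ p := by
      intro i
      have : (S i).card = Nat.card (f i) := by
        rw [hS]; simp [Set.toFinset_card, Nat.card_eq_fintype_card]
      rw [this]; exact hcardle i
    have hzeroS : ∀ i, (0 : R) ∈ S i := by
      intro i; simp [hS, Set.mem_toFinset]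
    have hsub : Finset.univ.erase (0 : R) ⊆
        Finset.univ.biUnion (fun i => (S i).erase 0) := by
      intro x hx
      obtain ⟨hx0, -⟩ := Finset.mem_erase.mp hx
      obtain ⟨i, hi⟩ := hcover x
      exact Finset.mem_biUnion.mpr ⟨i, Finset.mem_univ i,
        Finset.mem_erase.mpr ⟨hx0, by simp [hS, Set.mem_toFinset, hi]⟩⟩
    have hlhs : (Finset.univ.erase (0 : R)).card = p ^ 2 - 1 := by
      rw [Finset.card_erase_of_mem (Finset.mem_univ _), Finset.card_univ,
        ← Nat.card_eq_fintype_card, hcard]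
    have hrhs : (Finset.univ.biUnion (fun i => (S i).erase 0)).card ≤ p * (p - 1) := by
      refine (Finset.card_biUnion_le).trans ?_
      calc ∑ i : Fin p, ((S i).erase 0).card
          ≤ ∑ _i : Fin p, (p - 1) := by
            refine Finset.sum_le_sum fun i _ => ?_
            rw [Finset.card_erase_of_mem (hzeroS i)]
            exact Nat.sub_le_sub_right (hScard i) 1
        _ = p * (p - 1) := by simp [Finset.sum_const, mul_comm]
    have hfinal : p ^ 2 - 1 ≤ p * (p - 1) := hlhs ▸ (Finset.card_le_card hsub).trans hrhs
    have hmm : p * p = p * (p - 1) + p := by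
      have : (p - 1) + 1 = p := Nat.succ_pred_eq_of_pos hp.pos
      rw [← this, Nat.mul_succ, this]
    have h1p : 1 ≤ p ^ 2 := Nat.one_le_pow 2 p hp.pos
    have : p ^ 2 ≤ p * (p - 1) + 1 := by omega
    rw [pow_two, hmm] at this
    have : p ≤ 1 := Nat.le_of_add_le_add_left this
    omega
end

section
/- Let p be a prime and let R be a ring with exactly p² elements containing elements a, b such that p•a = 0, p•b = 0, the additive group of R is generated by a and b, and a² = a, b² = b, ab = b, ba = a. Then R is not the union of any family of proper right ideals; in particular, R is not the union of any finite family of proper two-sided ideals. -/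
/-- The ring `R₂` of order `p²` with presentation `a² = a, b² = b, ab = b, ba = a`
is not the union of any family of proper right ideals; in particular it is not the
union of any finite family of proper two-sided ideals. -/
theorem R2_not_union_of_right_ideals (p : ℕ) (hp : p.Prime)
    (R : Type*) [NonUnitalRing R] (hcard : Nat.card R = p ^ 2) (a b : R)
    (ha : p • a = 0) (hb : p • b = 0) (hgen : AddSubgroup.closure {a, b} = ⊤)
    (haa : a * a = a) (hbb : b * b = b) (hab : a * b = b) (hba : b * a = a) :
    (∀ (ι : Type*) (f : ι → AddSubgroup R),
      (∀ i, IsRightIdeal (f i) ∧ f i ≠ ⊤) → ¬ (∀ x : R, ∃ i, x ∈ f i)) ∧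
    (∀ (n : ℕ) (f : Fin n → AddSubgroup R),
      (∀ i, IsTwoSidedIdeal (f i) ∧ f i ≠ ⊤) → ¬ (∀ x : R, ∃ i, x ∈ f i)) := by
  have key : ∀ x : R, a * x = x := by
    intro x
    have hx : x ∈ AddSubgroup.closure {a, b} := by rw [hgen]; trivial
    induction hx using AddSubgroup.closure_induction with
    | mem y hy => rcases hy with rfl | rfl; exacts [haa, hab]
    | zero => exact mul_zero a
    | add y z _ _ hy hz => rw [mul_add, hy, hz]
    | neg y _ hy => rw [mul_neg, hy]
  have main : ∀ (I : AddSubgroup R), IsRightIdeal I → a ∈ I → I = ⊤ := by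
    intro I hI hmem
    rw [AddSubgroup.eq_top_iff']
    intro x
    have := hI x hmem
    rwa [key x] at this
  constructor
  · intro ι f hf hcov
    obtain ⟨i, hi⟩ := hcov a
    exact (hf i).2 (main _ (hf i).1 hi)
  · intro n f hf hcov
    obtain ⟨i, hi⟩ := hcov a
    exact (hf i).2 (main _ (hf i).1.2 hi)
end

section
/- Let p be a prime and let R be a ring with exactly p² elements containing elements a, b such that p•a = 0, p•b = 0, the additive group of R is generated by a and b, and a² = a, b² = b, ab = a, ba = b. Then R is the union of p + 1 proper right ideals, and R is not the union of any p proper right ideals. -/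
/-- The ring `R₃` of order `p²` with presentation `a² = a, b² = b, ab = a, ba = b`
is the union of `p + 1` proper right ideals, but not of any `p` proper right ideals. -/
theorem right_ideal_covering_number_of_R3 (p : ℕ) (hp : p.Prime)
    (R : Type*) [NonUnitalRing R] (hcard : Nat.card R = p ^ 2) (a b : R)
    (ha : p • a = 0) (hb : p • b = 0) (hgen : AddSubgroup.closure {a, b} = ⊤)
    (haa : a * a = a) (hbb : b * b = b) (hab : a * b = a) (hba : b * a = b) :
    (∃ f : Fin (p + 1) → AddSubgroup R,
      (∀ i, IsRightIdeal (f i) ∧ f i ≠ ⊤) ∧ ∀ x : R, ∃ i, x ∈ f i) ∧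
    ¬ ∃ f : Fin p → AddSubgroup R,
      (∀ i, IsRightIdeal (f i) ∧ f i ≠ ⊤) ∧ ∀ x : R, ∃ i, x ∈ f i := by
  classical
  have hp2 : 2 ≤ p := hp.two_le
  have hfin : Finite R := by
    have : Nat.card R ≠ 0 := by rw [hcard]; positivity
    exact Nat.finite_of_card_ne_zero this
  -- every x satisfies x * a = x and x * b = x
  have hxa : ∀ x : R, x * a = x := by
    intro x
    have hx : x ∈ AddSubgroup.closure ({a, b} : Set R) := hgen ▸ AddSubgroup.mem_top x
    induction hx using AddSubgroup.closure_induction with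
    | mem y hy =>
      simp only [Set.mem_insert_iff, Set.mem_singleton_iff] at hy
      rcases hy with hy | hy
      · rw [hy]; exact haa
      · rw [hy]; exact hba
    | zero => exact zero_mul a
    | add y z _ _ hy hz => rw [add_mul, hy, hz]
    | neg y _ hy => rw [neg_mul, hy]
  have hxb : ∀ x : R, x * b = x := by
    intro x
    have hx : x ∈ AddSubgroup.closure ({a, b} : Set R) := hgen ▸ AddSubgroup.mem_top x
    induction hx using AddSubgroup.closure_induction with
    | mem y hy =>
      simp only [Set.mem_insert_iff, Set.mem_singleton_iff] at hy
      rcases hy with hy | hy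
      · rw [hy]; exact hab
      · rw [hy]; exact hbb
    | zero => exact zero_mul b
    | add y z _ _ hy hz => rw [add_mul, hy, hz]
    | neg y _ hy => rw [neg_mul, hy]
  -- every additive subgroup is a right ideal
  have hRI : ∀ I : AddSubgroup R, IsRightIdeal I := by
    intro I r x hx
    have hr : r ∈ AddSubgroup.closure ({a, b} : Set R) := hgen ▸ AddSubgroup.mem_top r
    induction hr using AddSubgroup.closure_induction with
    | mem y hy =>
      simp only [Set.mem_insert_iff, Set.mem_singleton_iff] at hy
      rcases hy with hy | hy
      · rw [hy, hxa]; exact hx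
      · rw [hy, hxb]; exact hx
    | zero => rw [mul_zero]; exact zero_mem I
    | add y z _ _ hy hz => rw [mul_add]; exact add_mem hy hz
    | neg y _ hy => rw [mul_neg]; exact neg_mem hy
  -- representation of elements
  have hrep : ∀ x : R, ∃ m n : ℤ, x = m • a + n • b := by
    intro x
    have hx : x ∈ AddSubgroup.closure ({a, b} : Set R) := hgen ▸ AddSubgroup.mem_top x
    induction hx using AddSubgroup.closure_induction with
    | mem y hy =>
      simp only [Set.mem_insert_iff, Set.mem_singleton_iff] at hy
      rcases hy with hy | hy
      · exact ⟨1, 0, by simp [hy]⟩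
      · exact ⟨0, 1, by simp [hy]⟩
    | zero => exact ⟨0, 0, by simp⟩
    | add y z _ _ hy hz =>
      obtain ⟨m, n, rfl⟩ := hy
      obtain ⟨m', n', rfl⟩ := hz
      exact ⟨m + m', n + n', by rw [add_smul, add_smul]; abel⟩
    | neg y _ hy =>
      obtain ⟨m, n, rfl⟩ := hy
      exact ⟨-m, -n, by rw [neg_smul, neg_smul]; abel⟩
  have haZ : (p : ℤ) • a = 0 := by rw [natCast_zsmul]; exact ha
  have hbZ : (p : ℤ) • b = 0 := by rw [natCast_zsmul]; exact hb
  -- kill multiples of p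
  have hkill : ∀ (z : R), p • z = 0 → ∀ m : ℤ, (p : ℤ) ∣ m → m • z = 0 := by
    intro z hz m hm
    obtain ⟨k, rfl⟩ := hm
    rw [mul_comm, mul_zsmul, natCast_zsmul, hz, smul_zero]
  -- any cyclic subgroup generated by a p-torsion element is proper
  have hproper : ∀ z : R, p • z = 0 → AddSubgroup.zmultiples z ≠ ⊤ := by
    intro z hz htop
    have h1 : Nat.card (AddSubgroup.zmultiples z) = addOrderOf z := Nat.card_zmultiples z
    have h2 : addOrderOf z ∣ p := addOrderOf_dvd_of_nsmul_eq_zero hz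
    have h3 : Nat.card (AddSubgroup.zmultiples z) = Nat.card R := by
      rw [htop]; exact Nat.card_congr AddSubgroup.topEquiv.toEquiv
    have h4 : addOrderOf z ≤ p := Nat.le_of_dvd (by omega) h2
    have : p ^ 2 ≤ p := by
      calc p ^ 2 = Nat.card R := hcard.symm
        _ = addOrderOf z := by rw [← h3, h1]
        _ ≤ p := h4
    nlinarith
  constructor
  · -- existence of the covering by p + 1 proper right ideals
    refine ⟨fun i => if (i : ℕ) < p then AddSubgroup.zmultiples (a + (i : ℕ) • b)
      else AddSubgroup.zmultiples b, fun i => ?_, fun x => ?_⟩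
    · constructor
      · dsimp only; split <;> exact hRI _
      · dsimp only; split
        · apply hproper
          rw [smul_add, ha, zero_add, smul_comm, hb, smul_zero]
        · exact hproper b hb
    · obtain ⟨m, n, rfl⟩ := hrep x
      by_cases hm : (p : ℤ) ∣ m
      · refine ⟨⟨p, by omega⟩, ?_⟩
        have hnlt : ¬ ((⟨p, by omega⟩ : Fin (p + 1)) : ℕ) < p := by simp
        dsimp only
        rw [if_neg hnlt, hkill a ha m hm, zero_add]
        exact ⟨n, rfl⟩
      · -- m is invertible mod p
        haveI : Fact p.Prime := ⟨hp⟩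
        have hu : (m : ZMod p) ≠ 0 := by
          rwa [Ne, ZMod.intCast_zmod_eq_zero_iff_dvd]
        set u : ZMod p := (m : ZMod p) with hudef
        set c : ℕ := (u⁻¹ * (n : ZMod p)).val with hcdef
        have hclt : c < p := ZMod.val_lt _
        have hcast : ((c : ZMod p)) = u⁻¹ * (n : ZMod p) := by
          simp [hcdef, ZMod.natCast_val, ZMod.cast_id]
        have hmc : ((m * c - n : ℤ) : ZMod p) = 0 := by
          push_cast
          rw [hcast, ← hudef, ← mul_assoc, mul_inv_cancel₀ hu, one_mul, sub_self]
        have hdvd : (p : ℤ) ∣ (m * c - n) := by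
          rwa [ZMod.intCast_zmod_eq_zero_iff_dvd] at hmc
        refine ⟨⟨c, by omega⟩, ?_⟩
        have hlt : ((⟨c, by omega⟩ : Fin (p + 1)) : ℕ) < p := hclt
        dsimp only
        rw [if_pos hlt]
        refine ⟨m, ?_⟩
        have hzero : (m * (c : ℤ) - n) • b = 0 := hkill b hb _ hdvd
        have hcb : (c : ℕ) • b = ((c : ℤ)) • b := (natCast_zsmul b c).symm
        show m • (a + ((⟨c, by omega⟩ : Fin (p + 1)) : ℕ) • b) = m • a + n • b
        have : ((⟨c, by omega⟩ : Fin (p + 1)) : ℕ) = c := rfl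
        rw [this, hcb, smul_add, smul_smul]
        have heq : (m * (c : ℤ)) • b = n • b := by
          have h := sub_smul (m * (c : ℤ)) n b
          rw [hzero] at h
          exact sub_eq_zero.mp h.symm
        rw [heq]
  · -- nonexistence of covering by p proper right ideals
    rintro ⟨f, hf, hcov⟩
    haveI : Fintype R := Fintype.ofFinite R
    have hcardle : ∀ i, Nat.card (f i) ≤ p := by
      intro i
      have hdvd : Nat.card (f i) ∣ p ^ 2 := by
        rw [← hcard]; exact AddSubgroup.card_addSubgroup_dvd_card (f i)
      obtain ⟨k, hk, hkeq⟩ := (Nat.dvd_prime_pow hp).mp hdvd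
      interval_cases k
      · rw [pow_zero] at hkeq; omega
      · rw [pow_one] at hkeq; omega
      · exfalso
        apply (hf i).2
        apply AddSubgroup.eq_top_of_card_eq
        rw [hkeq, hcard]
    -- counting
    set F : Fin p → Finset R := fun i => ((f i : Set R).toFinite.toFinset).erase 0 with hF
    have hFcard : ∀ i, (F i).card ≤ p - 1 := by
      intro i
      have h0 : (0 : R) ∈ (f i : Set R).toFinite.toFinset :=
        (Set.Finite.mem_toFinset _).mpr (zero_mem (f i))
      rw [hF]
      simp only
      rw [Finset.card_erase_of_mem h0]
      have hcc : ((f i : Set R).toFinite.toFinset).card = Nat.card (f i) := by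
        rw [← Set.ncard_eq_toFinset_card, ← Nat.card_coe_set_eq]
        congr 1
      have := hcardle i
      omega
    have hsub : Finset.univ.erase (0 : R) ⊆ Finset.univ.biUnion F := by
      intro x hx
      obtain ⟨hx0, -⟩ := Finset.mem_erase.mp hx
      obtain ⟨i, hi⟩ := hcov x
      apply Finset.mem_biUnion.mpr
      refine ⟨i, Finset.mem_univ i, Finset.mem_erase.mpr ⟨hx0, ?_⟩⟩
      exact (Set.Finite.mem_toFinset _).mpr hi
    have h1 : (Finset.univ.erase (0 : R)).card = p ^ 2 - 1 := by
      rw [Finset.card_erase_of_mem (Finset.mem_univ _), Finset.card_univ,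
        ← Nat.card_eq_fintype_card, hcard]
    have h2 : (Finset.univ.biUnion F).card ≤ p * (p - 1) := by
      calc (Finset.univ.biUnion F).card ≤ ∑ i : Fin p, (F i).card :=
            Finset.card_biUnion_le
        _ ≤ ∑ _i : Fin p, (p - 1) := Finset.sum_le_sum (fun i _ => hFcard i)
        _ = p * (p - 1) := by simp [Finset.sum_const, mul_comm]
    have h3 : p ^ 2 - 1 ≤ p * (p - 1) := h1 ▸ (Finset.card_le_card hsub).trans h2
    have h4 : p * (p - 1) = p * p - p := by rw [Nat.mul_sub, mul_one]
    have h5 : p ≤ p * p := Nat.le_mul_of_pos_left _ (by omega)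
    have h6 : p ^ 2 = p * p := sq p
    omega
end

section
/- Let p be a prime and let R be a ring with exactly p² elements containing elements a, b such that p•a = 0, p•b = 0, the additive group of R is generated by a and b, and a² = a, b² = b, ab = a, ba = b. Then R is not the union of any family of proper left ideals; in particular, R is not the union of any finite family of proper two-sided ideals. -/
/-- The ring `R₃` of order `p²` with presentation `a² = a, b² = b, ab = a, ba = b`
is not the union of any family of proper left ideals; in particular it is not the
union of any finite family of proper two-sided ideals. -/
theorem R3_not_union_of_left_ideals (p : ℕ) (hp : p.Prime)
    (R : Type*) [NonUnitalRing R] (hcard : Nat.card R = p ^ 2) (a b : R)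
    (ha : p • a = 0) (hb : p • b = 0) (hgen : AddSubgroup.closure {a, b} = ⊤)
    (haa : a * a = a) (hbb : b * b = b) (hab : a * b = a) (hba : b * a = b) :
    (∀ (ι : Type*) (f : ι → AddSubgroup R),
      (∀ i, IsLeftIdeal (f i) ∧ f i ≠ ⊤) → ¬ (∀ x : R, ∃ i, x ∈ f i)) ∧
    (∀ (n : ℕ) (f : Fin n → AddSubgroup R),
      (∀ i, IsTwoSidedIdeal (f i) ∧ f i ≠ ⊤) → ¬ (∀ x : R, ∃ i, x ∈ f i)) := by
  have key : ∀ I : AddSubgroup R, IsLeftIdeal I → I ≠ ⊤ → a ∉ I := by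
    intro I hI hne haI
    apply hne
    rw [eq_top_iff, ← hgen]
    rw [AddSubgroup.closure_le]
    intro x hx
    rcases hx with h | h
    · subst h; exact haI
    · simp only [Set.mem_singleton_iff] at h
      rw [h, ← hba]
      exact hI b haI
  constructor
  · intro ι f hf hall
    obtain ⟨i, hai⟩ := hall a
    exact key (f i) (hf i).1 (hf i).2 hai
  · intro n f hf hall
    obtain ⟨i, hai⟩ := hall a
    exact key (f i) (hf i).1.1 (hf i).2 hai
end

section
/- Let p be a prime and let R be a ring with exactly p³ elements containing elements a, b, c such that p•a = p•b = p•c = 0, the additive group of R is generated by a, b, c, and a² = a, ba = b, ac = c, b² = c² = ab = bc = ca = cb = 0. Then the additive subgroup J generated by b is a two-sided ideal of R, and the quotient ring R/J has exactly p² elements and contains elements u, v with p•u = 0, p•v = 0, additively generating R/J, satisfying u² = u, v² = v, uv = v, vu = u. -/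
/-- In the ring `R₄` of order `p³` with presentation
`a² = a, ba = b, ac = c, b² = c² = ab = bc = ca = cb = 0`, the additive subgroup
generated by `b` is a two-sided ideal `J`, and the quotient ring `R/J` has order
`p²` with generators `u, v` satisfying `u² = u, v² = v, uv = v, vu = u`. -/
theorem R4_quotient_by_b_is_R2 (p : ℕ) (hp : p.Prime)
    (R : Type*) [NonUnitalRing R] (hcard : Nat.card R = p ^ 3) (a b c : R)
    (ha : p • a = 0) (hb : p • b = 0) (hc : p • c = 0)
    (hgen : AddSubgroup.closure {a, b, c} = ⊤)
    (haa : a * a = a) (hba : b * a = b) (hac : a * c = c)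
    (hbb : b * b = 0) (hcc : c * c = 0) (hab : a * b = 0)
    (hbc : b * c = 0) (hca : c * a = 0) (hcb : c * b = 0) :
    IsTwoSidedIdeal (AddSubgroup.closure {b}) ∧
    ∃ J : TwoSidedIdeal R, (J : Set R) = ((AddSubgroup.closure {b} : AddSubgroup R) : Set R) ∧
      Nat.card J.ringCon.Quotient = p ^ 2 ∧
      ∃ u v : J.ringCon.Quotient, p • u = 0 ∧ p • v = 0 ∧
        AddSubgroup.closure {u, v} = ⊤ ∧
        u * u = u ∧ v * v = v ∧ u * v = v ∧ v * u = u := by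
  haveI : Fact p.Prime := ⟨hp⟩
  haveI : NeZero p := ⟨hp.ne_zero⟩
  have hgen' : ∀ x : R, x ∈ AddSubgroup.closure ({a, b, c} : Set R) := fun x =>
    hgen ▸ AddSubgroup.mem_top x
  set J' : AddSubgroup R := AddSubgroup.closure {b} with hJ'
  have h1 : ∀ r : R, r * b = 0 := by
    intro r
    refine AddSubgroup.closure_induction (fun y hy => ?_) (zero_mul b)
      (fun y z _ _ hy hz => by rw [add_mul, hy, hz, add_zero])
      (fun y _ hy => by rw [neg_mul, hy, neg_zero]) (hgen' r)
    rcases hy with rfl | rfl | rfl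
    exacts [hab, hbb, hcb]
  have h2 : ∀ r : R, b * r ∈ J' := by
    intro r
    refine AddSubgroup.closure_induction (fun y hy => ?_) (by rw [mul_zero]; exact J'.zero_mem)
      (fun y z _ _ hy hz => by rw [mul_add]; exact J'.add_mem hy hz)
      (fun y _ hy => by rw [mul_neg]; exact J'.neg_mem hy) (hgen' r)
    rcases hy with rfl | rfl | rfl
    · rw [hba]; exact AddSubgroup.subset_closure rfl
    · rw [hbb]; exact J'.zero_mem
    · rw [hbc]; exact J'.zero_mem
  have hleft : IsLeftIdeal J' := by
    intro r x hx
    refine AddSubgroup.closure_induction (fun y hy => ?_) (by rw [mul_zero]; exact J'.zero_mem)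
      (fun y z _ _ hy hz => by rw [mul_add]; exact J'.add_mem hy hz)
      (fun y _ hy => by rw [mul_neg]; exact J'.neg_mem hy) hx
    rcases hy with rfl
    rw [h1 r]; exact J'.zero_mem
  have hright : IsRightIdeal J' := by
    intro r x hx
    refine AddSubgroup.closure_induction (fun y hy => ?_) (by rw [zero_mul]; exact J'.zero_mem)
      (fun y z _ _ hy hz => by rw [add_mul]; exact J'.add_mem hy hz)
      (fun y _ hy => by rw [neg_mul]; exact J'.neg_mem hy) hx
    rcases hy with rfl
    exact h2 r
  refine ⟨⟨hleft, hright⟩, ?_⟩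
  set J : TwoSidedIdeal R := TwoSidedIdeal.mk' (J' : Set R) J'.zero_mem
    (fun hx hy => J'.add_mem hx hy) (fun hx => J'.neg_mem hx)
    (fun {x y} hy => hleft x hy) (fun {x y} hx => hright y hx) with hJ
  have hmemJ : ∀ x : R, x ∈ J ↔ x ∈ J' := by
    intro x
    rw [hJ]
    exact TwoSidedIdeal.mem_mk' _ _ _ _ _ _ x
  -- reduce integer multiples mod p
  have key : ∀ (z : R) (m : ℤ), p • z = 0 → (((m : ZMod p)).val : ℤ) • z = m • z := by
    intro z m hz
    obtain ⟨k, hk⟩ : (p : ℤ) ∣ m - ((m : ZMod p).val : ℤ) := by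
      rw [← ZMod.intCast_zmod_eq_zero_iff_dvd]
      push_cast
      simp
    have hzz : m • z - ((m : ZMod p).val : ℤ) • z = 0 := by
      rw [← sub_smul, hk, mul_comm, mul_smul]
      have hpz : (p : ℤ) • z = 0 := by rw [natCast_zsmul, hz]
      rw [hpz, smul_zero]
    exact (sub_eq_zero.mp hzz).symm
  -- b ≠ 0
  have hbne : b ≠ 0 := by
    intro h0
    have hsur : Function.Surjective
        (fun ij : ZMod p × ZMod p => ((ij.1.val : ℤ)) • a + ((ij.2.val : ℤ)) • c) := by
      intro x
      obtain ⟨m, n, rfl⟩ : ∃ m n : ℤ, m • a + n • c = x := by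
        refine AddSubgroup.closure_induction (fun y hy => ?_) ⟨0, 0, by simp⟩
          (fun y z _ _ hy hz => ?_) (fun y _ hy => ?_) (hgen' x)
        · rcases hy with rfl | rfl | rfl
          exacts [⟨1, 0, by simp⟩, ⟨0, 0, by simp [h0]⟩, ⟨0, 1, by simp⟩]
        · obtain ⟨m1, n1, h1'⟩ := hy
          obtain ⟨m2, n2, h2'⟩ := hz
          exact ⟨m1 + m2, n1 + n2, by rw [add_smul, add_smul, ← h1', ← h2']; abel⟩
        · obtain ⟨m, n, h'⟩ := hy
          exact ⟨-m, -n, by rw [neg_smul, neg_smul, ← h', neg_add]⟩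
      exact ⟨(m, n), by simp only [key a m ha, key c n hc]⟩
    have hle : Nat.card R ≤ p * p := by
      calc Nat.card R ≤ Nat.card (ZMod p × ZMod p) := Nat.card_le_card_of_surjective _ hsur
      _ = p * p := by rw [Nat.card_prod, Nat.card_zmod]
    rw [hcard] at hle
    have hlt : p ^ 2 < p ^ 3 := Nat.pow_lt_pow_right hp.one_lt (by norm_num)
    have : p * p = p ^ 2 := by ring
    rw [this] at hle
    exact absurd hle (not_le.mpr hlt)
  have hob : addOrderOf b = p := addOrderOf_eq_prime hb hbne
  have hcardJ' : Nat.card J' = p := by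
    rw [hJ', ← AddSubgroup.zmultiples_eq_closure, Nat.card_zmultiples, hob]
  have hlag := AddSubgroup.card_eq_card_quotient_mul_card_addSubgroup J'
  have hq : Nat.card (R ⧸ J') = p ^ 2 := by
    rw [hcard, hcardJ'] at hlag
    have h3 : p ^ 3 = p ^ 2 * p := by ring
    rw [h3] at hlag
    exact Nat.eq_of_mul_eq_mul_right (Nat.pos_of_ne_zero hp.ne_zero) hlag.symm
  have e : J.ringCon.Quotient ≃ R ⧸ J' := by
    refine Quotient.congrRight (fun x y => ?_)
    show J.ringCon x y ↔ QuotientAddGroup.leftRel J' x y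
    rw [J.rel_iff, hmemJ, QuotientAddGroup.leftRel_apply,
      show -x + y = -(x - y) by abel, neg_mem_iff]
  have hcardQ : Nat.card J.ringCon.Quotient = p ^ 2 := by
    rw [Nat.card_congr e, hq]
  -- the canonical additive hom to the quotient
  set f : R →+ J.ringCon.Quotient :=
    { toFun := fun x => (x : J.ringCon.Quotient)
      map_zero' := rfl
      map_add' := fun x y => (RingCon.coe_add _ x y) } with hf
  have hsurf : Function.Surjective f := fun q => Quotient.inductionOn q (fun x => ⟨x, rfl⟩)
  have hfb : f b = 0 := by
    change (b : J.ringCon.Quotient) = 0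
    rw [← RingCon.coe_zero]
    refine (RingCon.eq _).mpr ?_
    rw [J.rel_iff, sub_zero]
    exact (hmemJ b).mpr (AddSubgroup.subset_closure rfl)
  refine ⟨J, by rw [hJ, TwoSidedIdeal.coe_mk'], hcardQ,
    (a : J.ringCon.Quotient), ((a + c : R) : J.ringCon.Quotient), ?_, ?_, ?_, ?_, ?_, ?_, ?_⟩
  · show p • f a = 0
    rw [← map_nsmul, ha, map_zero]
  · show p • f (a + c) = 0
    rw [← map_nsmul, smul_add, ha, hc, add_zero, map_zero]
  · rw [eq_top_iff]
    have h5 : (⊤ : AddSubgroup J.ringCon.Quotient) = AddSubgroup.closure (f '' {a, b, c}) := by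
      rw [← AddMonoidHom.map_closure, hgen, AddSubgroup.map_top_of_surjective f hsurf]
    rw [h5]
    refine (AddSubgroup.closure_le _).mpr ?_
    rintro y ⟨x, hx, rfl⟩
    rcases hx with rfl | rfl | rfl
    · exact AddSubgroup.subset_closure (Or.inl rfl)
    · rw [hfb]; exact AddSubgroup.zero_mem _
    · have hfc : f x = ((a + x : R) : J.ringCon.Quotient) - (a : J.ringCon.Quotient) := by
        show (x : J.ringCon.Quotient) = _
        rw [RingCon.coe_add]; abel
      rw [hfc]
      exact sub_mem (AddSubgroup.subset_closure (Or.inr rfl))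
        (AddSubgroup.subset_closure (Or.inl rfl))
  · rw [← RingCon.coe_mul, haa]
  · rw [← RingCon.coe_mul]
    have : (a + c) * (a + c) = a + c := by
      rw [add_mul, mul_add, mul_add, haa, hac, hca, hcc, add_zero, add_zero]
    rw [this]
  · rw [← RingCon.coe_mul]
    have : a * (a + c) = a + c := by rw [mul_add, haa, hac]
    rw [this]
  · rw [← RingCon.coe_mul]
    have : (a + c) * a = a := by rw [add_mul, haa, hca, add_zero]
    rw [this]
end

section
/- Let p be a prime and let R be a ring with exactly p³ elements containing elements a, b, c such that p•a = p•b = p•c = 0, the additive group of R is generated by a, b, c, and a² = a, ba = b, ac = c, b² = c² = ab = bc = ca = cb = 0. Then no proper two-sided ideal of R contains a; consequently, R is not the union of any family of proper two-sided ideals. -/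
/-- In the ring `R₄` of order `p³`, no proper two-sided ideal contains `a`;
consequently `R₄` is not the union of any family of proper two-sided ideals. -/
theorem R4_not_union_of_two_sided_ideals (p : ℕ) (hp : p.Prime)
    (R : Type*) [NonUnitalRing R] (hcard : Nat.card R = p ^ 3) (a b c : R)
    (ha : p • a = 0) (hb : p • b = 0) (hc : p • c = 0)
    (hgen : AddSubgroup.closure {a, b, c} = ⊤)
    (haa : a * a = a) (hba : b * a = b) (hac : a * c = c)
    (hbb : b * b = 0) (hcc : c * c = 0) (hab : a * b = 0)
    (hbc : b * c = 0) (hca : c * a = 0) (hcb : c * b = 0) :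
    (∀ I : AddSubgroup R, IsTwoSidedIdeal I → I ≠ ⊤ → a ∉ I) ∧
    (∀ (ι : Type*) (f : ι → AddSubgroup R),
      (∀ i, IsTwoSidedIdeal (f i) ∧ f i ≠ ⊤) → ¬ (∀ x : R, ∃ i, x ∈ f i)) := by
  have key : ∀ I : AddSubgroup R, IsTwoSidedIdeal I → I ≠ ⊤ → a ∉ I := by
    intro I hI hne haI
    apply hne
    rw [eq_top_iff, ← hgen, AddSubgroup.closure_le]
    intro x hx
    rcases hx with rfl | rfl | rfl
    · exact haI
    · exact hba ▸ hI.1 x haI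
    · exact hac ▸ hI.2 x haI
  refine ⟨key, fun ι f hf hcov => ?_⟩
  obtain ⟨i, hi⟩ := hcov a
  exact key (f i) (hf i).1 (hf i).2 hi
end

section
/- Let p be a prime and let R be a ring with exactly p³ elements containing elements a, b, c such that p•a = p•b = p•c = 0, the additive group of R is generated by a, b, c, and a² = a, ba = b, ac = c, b² = c² = ab = bc = ca = cb = 0. Then R is the union of p + 1 proper left ideals, and R is not the union of any p proper left ideals. -/
section AuxR4

variable {R : Type*} [NonUnitalRing R]

lemma aux_smul_val (p : ℕ) [NeZero p] (u : R) (hu : p • u = 0) (i : ℤ) :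
    ((i : ZMod p).val : ℤ) • u = i • u := by
  have hpz : (p:ℤ) • u = 0 := by rw [natCast_zsmul]; exact hu
  have hd : (p:ℤ) ∣ ((i : ZMod p).val : ℤ) - i := by
    have h0 : ((((i : ZMod p).val : ℤ) - i : ℤ) : ZMod p) = 0 := by
      push_cast
      simp [ZMod.natCast_val, ZMod.intCast_cast]
    exact (ZMod.intCast_zmod_eq_zero_iff_dvd _ p).mp h0
  obtain ⟨k, hk⟩ := hd
  have h0 : (((i : ZMod p).val : ℤ) - i) • u = 0 := by
    rw [hk, mul_comm, mul_smul, hpz, smul_zero]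
  rw [sub_smul, sub_eq_zero] at h0
  exact h0

lemma aux_dvd_smul (p : ℕ) (u : R) (hu : p • u = 0) (i : ℤ) (hdvd : (p:ℤ) ∣ i) :
    i • u = 0 := by
  have hpz : (p:ℤ) • u = 0 := by rw [natCast_zsmul]; exact hu
  obtain ⟨k, hk⟩ := hdvd
  rw [hk, mul_comm, mul_smul, hpz, smul_zero]

/-- If `R` is generated by two `p`-torsion elements, its cardinality is at most `p^2`. -/
lemma aux_card_le (p : ℕ) [NeZero p] (u v : R) (hu : p • u = 0) (hv : p • v = 0)
    (htop : AddSubgroup.closure {u, v} = ⊤) : Nat.card R ≤ p ^ 2 := by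
  have hrep : ∀ x : R, ∃ i j : ℤ, x = i • u + j • v := by
    intro x
    have hx : x ∈ AddSubgroup.closure ({u, v} : Set R) := htop ▸ AddSubgroup.mem_top x
    refine AddSubgroup.closure_induction ?_ ⟨0, 0, by simp⟩
      (fun x y _ _ hx hy => ?_) (fun x _ hx => ?_) hx
    · rintro x (rfl | rfl)
      · exact ⟨1, 0, by simp⟩
      · exact ⟨0, 1, by simp⟩
    · obtain ⟨i, j, hx⟩ := hx
      obtain ⟨i', j', hy⟩ := hy
      exact ⟨i + i', j + j', by rw [hx, hy, add_smul, add_smul]; abel⟩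
    · obtain ⟨i, j, hx⟩ := hx
      exact ⟨-i, -j, by rw [hx, neg_smul, neg_smul, neg_add]⟩
  have hsurj : Function.Surjective
      (fun z : ZMod p × ZMod p => (z.1.val : ℤ) • u + (z.2.val : ℤ) • v) := by
    intro x
    obtain ⟨i, j, rfl⟩ := hrep x
    exact ⟨((i : ZMod p), (j : ZMod p)), by
      simp only [aux_smul_val p u hu i, aux_smul_val p v hv j]⟩
  have hle := Nat.card_le_card_of_surjective _ hsurj
  simpa [Nat.card_prod, Nat.card_zmod, sq] using hle

end AuxR4

/-- The ring `R₄` of order `p³` is the union of `p + 1` proper left ideals,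
but not of any `p` proper left ideals. -/
theorem R4_left_ideal_covering_number (p : ℕ) (hp : p.Prime)
    (R : Type*) [NonUnitalRing R] (hcard : Nat.card R = p ^ 3) (a b c : R)
    (ha : p • a = 0) (hb : p • b = 0) (hc : p • c = 0)
    (hgen : AddSubgroup.closure {a, b, c} = ⊤)
    (haa : a * a = a) (hba : b * a = b) (hac : a * c = c)
    (hbb : b * b = 0) (hcc : c * c = 0) (hab : a * b = 0)
    (hbc : b * c = 0) (hca : c * a = 0) (hcb : c * b = 0) :
    (∃ f : Fin (p + 1) → AddSubgroup R,
      (∀ i, IsLeftIdeal (f i) ∧ f i ≠ ⊤) ∧ ∀ x : R, ∃ i, x ∈ f i) ∧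
    ¬ ∃ f : Fin p → AddSubgroup R,
      (∀ i, IsLeftIdeal (f i) ∧ f i ≠ ⊤) ∧ ∀ x : R, ∃ i, x ∈ f i := by
  haveI : Fact p.Prime := ⟨hp⟩
  haveI : NeZero p := ⟨hp.ne_zero⟩
  have hp2 : 2 ≤ p := hp.two_le
  have hfinR : Finite R := Nat.finite_of_card_ne_zero (by rw [hcard]; positivity)
  have hp23 : p ^ 2 < p ^ 3 := Nat.pow_lt_pow_right hp.one_lt (by norm_num)
  -- properness criterion
  have hproper : ∀ u v : R, p • u = 0 → p • v = 0 →
      AddSubgroup.closure {u, v} ≠ (⊤ : AddSubgroup R) := by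
    intro u v hu hv htop
    have h := aux_card_le p u v hu hv htop
    rw [hcard] at h
    exact absurd h (not_le.mpr hp23)
  -- facts about multiplication (for all r, by closure induction over ⊤)
  have hmul : ∀ r : R, r * b = 0 ∧ ∃ i j : ℤ, r * a = i • a + j • b ∧ r * c = i • c := by
    intro r
    have hr : r ∈ AddSubgroup.closure ({a, b, c} : Set R) := hgen ▸ AddSubgroup.mem_top r
    refine AddSubgroup.closure_induction ?_ ?_ (fun x y _ _ hx hy => ?_)
      (fun x _ hx => ?_) hr
    · rintro x (rfl | rfl | rfl)
      · exact ⟨hab, 1, 0, by simp [haa], by simp [hac]⟩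
      · exact ⟨hbb, 0, 1, by simp [hba], by simp [hbc]⟩
      · exact ⟨hcb, 0, 0, by simp [hca], by simp [hcc]⟩
    · exact ⟨zero_mul b, 0, 0, by simp [zero_mul], by simp [zero_mul]⟩
    · obtain ⟨h1, i, j, h2, h3⟩ := hx
      obtain ⟨h1', i', j', h2', h3'⟩ := hy
      refine ⟨by rw [add_mul, h1, h1', add_zero], i + i', j + j', ?_, ?_⟩
      · rw [add_mul, h2, h2', add_smul, add_smul]; abel
      · rw [add_mul, h3, h3', add_smul]
    · obtain ⟨h1, i, j, h2, h3⟩ := hx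
      refine ⟨by rw [neg_mul, h1, neg_zero], -i, -j, ?_, ?_⟩
      · rw [neg_mul, h2, neg_smul, neg_smul, neg_add]
      · rw [neg_mul, h3, neg_smul]
  -- representation of elements
  have hrep : ∀ x : R, ∃ i j k : ℤ, x = i • a + j • b + k • c := by
    intro x
    have hx : x ∈ AddSubgroup.closure ({a, b, c} : Set R) := hgen ▸ AddSubgroup.mem_top x
    refine AddSubgroup.closure_induction ?_ ⟨0, 0, 0, by simp⟩
      (fun x y _ _ hx hy => ?_) (fun x _ hx => ?_) hx
    · rintro x (rfl | rfl | rfl)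
      · exact ⟨1, 0, 0, by simp⟩
      · exact ⟨0, 1, 0, by simp⟩
      · exact ⟨0, 0, 1, by simp⟩
    · obtain ⟨i, j, k, hx⟩ := hx
      obtain ⟨i', j', k', hy⟩ := hy
      exact ⟨i + i', j + j', k + k', by
        rw [hx, hy, add_smul, add_smul, add_smul]; abel⟩
    · obtain ⟨i, j, k, hx⟩ := hx
      exact ⟨-i, -j, -k, by rw [hx]; simp only [neg_smul]; abel⟩
  constructor
  · -- the covering by p + 1 proper left ideals
    classical
    refine ⟨fun i => if (i : ℕ) < p then AddSubgroup.closure {b, c - ((i : ℕ) : ℤ) • a}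
      else AddSubgroup.closure {a, b}, fun i => ?_, fun x => ?_⟩
    · by_cases hi : (i : ℕ) < p
      · simp only [if_pos hi]
        set t : ℤ := ((i : ℕ) : ℤ)
        constructor
        · -- left ideal
          intro r x hx
          refine AddSubgroup.closure_induction ?_ (by rw [mul_zero]; exact zero_mem _)
            (fun x y _ _ hx hy => by rw [mul_add]; exact add_mem hx hy)
            (fun x _ hx => by rw [mul_neg]; exact neg_mem hx) hx
          rintro x (rfl | rfl)
          · rw [(hmul r).1]; exact zero_mem _
          · obtain ⟨h1, i', j', h2, h3⟩ := hmul r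
            have heq : r * (c - t • a) = i' • (c - t • a) + (-(t * j')) • b := by
              rw [mul_sub, h3, mul_smul_comm, h2]
              module
            rw [heq]
            exact add_mem (zsmul_mem (AddSubgroup.subset_closure (by simp)) _)
              (zsmul_mem (AddSubgroup.subset_closure (by simp)) _)
        · -- proper
          apply hproper
          · exact hb
          · rw [smul_sub, hc, zero_sub, neg_eq_zero, smul_comm, ha, smul_zero]
      · simp only [if_neg hi]
        constructor
        · intro r x hx
          refine AddSubgroup.closure_induction ?_ (by rw [mul_zero]; exact zero_mem _)
            (fun x y _ _ hx hy => by rw [mul_add]; exact add_mem hx hy)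
            (fun x _ hx => by rw [mul_neg]; exact neg_mem hx) hx
          rintro x (rfl | rfl)
          · obtain ⟨h1, i', j', h2, h3⟩ := hmul r
            rw [h2]
            exact add_mem (zsmul_mem (AddSubgroup.subset_closure (by simp)) _)
              (zsmul_mem (AddSubgroup.subset_closure (by simp)) _)
          · rw [(hmul r).1]; exact zero_mem _
        · exact hproper a b ha hb
    · -- coverage
      obtain ⟨i, j, k, rfl⟩ := hrep x
      by_cases hk : (k : ZMod p) = 0
      · refine ⟨⟨p, Nat.lt_succ_self p⟩, ?_⟩
        simp only [lt_irrefl, if_neg (lt_irrefl p)]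
        have hk0 : k • c = 0 := aux_dvd_smul p c hc k
          ((ZMod.intCast_zmod_eq_zero_iff_dvd k p).mp hk)
        rw [hk0, add_zero]
        exact add_mem (zsmul_mem (AddSubgroup.subset_closure (by simp)) _)
          (zsmul_mem (AddSubgroup.subset_closure (by simp)) _)
      · set t : ZMod p := (-(i : ZMod p)) * (k : ZMod p)⁻¹ with ht
        have htval : t.val < p := ZMod.val_lt t
        refine ⟨⟨t.val, htval.trans (Nat.lt_succ_self p)⟩, ?_⟩
        simp only [if_pos htval]
        set T : ℤ := ((t.val : ℕ) : ℤ)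
        have hzero : (i + T * k) • a = 0 := by
          apply aux_dvd_smul p a ha
          apply (ZMod.intCast_zmod_eq_zero_iff_dvd _ p).mp
          push_cast
          have hT : ((T : ℤ) : ZMod p) = t := by
            simp [T, ZMod.natCast_val, ZMod.cast_id]
          rw [hT, ht]
          field_simp
          ring
        have hx2 : i • a + j • b + k • c = (i + T * k) • a + (j • b + k • (c - T • a)) := by
          rw [smul_sub, smul_smul, add_smul, mul_smul, mul_comm k T, mul_smul]
          abel
        rw [hx2, hzero, zero_add]
        exact add_mem (zsmul_mem (AddSubgroup.subset_closure (by simp)) _)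
          (zsmul_mem (AddSubgroup.subset_closure (by simp)) _)
  · -- no covering by p proper left ideals
    rintro ⟨f, hf, hcov⟩
    classical
    haveI : Fintype R := Fintype.ofFinite R
    have hcardi : ∀ i, Nat.card (f i) ≤ p ^ 2 := by
      intro i
      have hdvd : Nat.card (f i) ∣ Nat.card R := AddSubgroup.card_addSubgroup_dvd_card (f i)
      rw [hcard] at hdvd
      obtain ⟨m, hm3, hmk⟩ := (Nat.dvd_prime_pow hp).mp hdvd
      have hne : Nat.card (f i) ≠ p ^ 3 := by
        intro h
        exact (hf i).2 (AddSubgroup.eq_top_of_card_eq _ (h.trans hcard.symm))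
      have hm2 : m ≤ 2 := by
        rcases Nat.lt_or_ge m 3 with h | h
        · omega
        · exfalso; apply hne; rw [hmk]; congr 1; omega
      rw [hmk]
      exact Nat.pow_le_pow_right hp.one_le hm2
    -- counting
    let s : Fin p → Finset R := fun i => ((f i : Set R).toFinset).erase 0
    have hsub : (Finset.univ : Finset R).erase 0 ⊆ Finset.univ.biUnion s := by
      intro x hx
      obtain ⟨i, hi⟩ := hcov x
      refine Finset.mem_biUnion.mpr ⟨i, Finset.mem_univ i, ?_⟩
      exact Finset.mem_erase.mpr ⟨(Finset.mem_erase.mp hx).1, Set.mem_toFinset.mpr hi⟩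
    have hcards : ∀ i, (s i).card ≤ p ^ 2 - 1 := by
      intro i
      have h0 : (0 : R) ∈ (f i : Set R).toFinset := Set.mem_toFinset.mpr (zero_mem (f i))
      have := Finset.card_erase_of_mem h0
      rw [this]
      have hcc : ((f i : Set R).toFinset).card = Nat.card (f i) := by
        rw [Set.toFinset_card, Nat.card_eq_fintype_card]
        simp [SetLike.coe_sort_coe]
      rw [hcc]
      exact Nat.sub_le_sub_right (hcardi i) 1
    have hbig : ((Finset.univ : Finset R).erase 0).card = p ^ 3 - 1 := by
      rw [Finset.card_erase_of_mem (Finset.mem_univ 0), Finset.card_univ,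
        ← Nat.card_eq_fintype_card, hcard]
    have hle : p ^ 3 - 1 ≤ p * (p ^ 2 - 1) := by
      calc p ^ 3 - 1 = ((Finset.univ : Finset R).erase 0).card := hbig.symm
        _ ≤ (Finset.univ.biUnion s).card := Finset.card_le_card hsub
        _ ≤ ∑ i, (s i).card := Finset.card_biUnion_le
        _ ≤ ∑ _i : Fin p, (p ^ 2 - 1) := Finset.sum_le_sum (fun i _ => hcards i)
        _ = p * (p ^ 2 - 1) := by simp [Finset.sum_const, Finset.card_univ, mul_comm]
    have hmul' : p * (p ^ 2 - 1) = p ^ 3 - p := by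
      rw [Nat.mul_sub, mul_one, ← pow_succ']
    rw [hmul'] at hle
    have hppow : p ≤ p ^ 3 := Nat.le_self_pow (by norm_num) p
    omega
end

section
/- Let p be a prime and let R be a ring with exactly p³ elements containing elements a, b, c such that p•a = p•b = p•c = 0, the additive group of R is generated by a, b, c, and a² = a, ba = b, ac = c, b² = c² = ab = bc = ca = cb = 0. Then R is the union of p + 1 proper right ideals, and R is not the union of any p proper right ideals. -/
/-- The ring `R₄` of order `p³` is the union of `p + 1` proper right ideals,
but not of any `p` proper right ideals. -/
theorem R4_right_ideal_covering_number (p : ℕ) (hp : p.Prime)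
    (R : Type*) [NonUnitalRing R] (hcard : Nat.card R = p ^ 3) (a b c : R)
    (ha : p • a = 0) (hb : p • b = 0) (hc : p • c = 0)
    (hgen : AddSubgroup.closure {a, b, c} = ⊤)
    (haa : a * a = a) (hba : b * a = b) (hac : a * c = c)
    (hbb : b * b = 0) (hcc : c * c = 0) (hab : a * b = 0)
    (hbc : b * c = 0) (hca : c * a = 0) (hcb : c * b = 0) :
    (∃ f : Fin (p + 1) → AddSubgroup R,
      (∀ i, IsRightIdeal (f i) ∧ f i ≠ ⊤) ∧ ∀ x : R, ∃ i, x ∈ f i) ∧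
    ¬ ∃ f : Fin p → AddSubgroup R,
      (∀ i, IsRightIdeal (f i) ∧ f i ≠ ⊤) ∧ ∀ x : R, ∃ i, x ∈ f i := by
  classical
  haveI hFact : Fact p.Prime := ⟨hp⟩
  have hp2 : 2 ≤ p := hp.two_le
  -- kill multiples of p
  have hkill : ∀ (m : ℤ) (x : R), p • x = 0 → (p : ℤ) ∣ m → m • x = 0 := by
    rintro m x hx ⟨q, rfl⟩
    rw [mul_comm, mul_smul, natCast_zsmul, hx, smul_zero]
  -- decomposition of elements
  have hdec : ∀ x : R, ∃ α β γ : ℤ, x = α • a + β • b + γ • c := by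
    intro x
    have hx : x ∈ AddSubgroup.closure {a, b, c} := hgen ▸ AddSubgroup.mem_top x
    induction hx using AddSubgroup.closure_induction with
    | mem y hy =>
      rcases hy with h | h | h <;> subst h
      · exact ⟨1, 0, 0, by simp⟩
      · exact ⟨0, 1, 0, by simp⟩
      · exact ⟨0, 0, 1, by simp⟩
    | zero => exact ⟨0, 0, 0, by simp⟩
    | add x y _ _ ihx ihy =>
      obtain ⟨α, β, γ, rfl⟩ := ihx
      obtain ⟨α', β', γ', rfl⟩ := ihy
      exact ⟨α + α', β + β', γ + γ', by simp only [add_zsmul]; abel⟩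
    | neg x _ ihx =>
      obtain ⟨α, β, γ, rfl⟩ := ihx
      exact ⟨-α, -β, -γ, by simp only [neg_zsmul]; abel⟩
  -- closure of two p-torsion elements is small, hence proper
  have hsmall : ∀ x y : R, p • x = 0 → p • y = 0 → AddSubgroup.closure {x, y} ≠ ⊤ := by
    intro x y hx hy htop
    have hdec2 : ∀ z : R, ∃ m n : ℤ, z = m • x + n • y := by
      intro z
      have hz : z ∈ AddSubgroup.closure {x, y} := htop ▸ AddSubgroup.mem_top z
      induction hz using AddSubgroup.closure_induction with
      | mem w hw =>
        rcases hw with h | h <;> subst h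
        · exact ⟨1, 0, by simp⟩
        · exact ⟨0, 1, by simp⟩
      | zero => exact ⟨0, 0, by simp⟩
      | add u v _ _ ihu ihv =>
        obtain ⟨m, n, rfl⟩ := ihu
        obtain ⟨m', n', rfl⟩ := ihv
        exact ⟨m + m', n + n', by simp only [add_zsmul]; abel⟩
      | neg u _ ihu =>
        obtain ⟨m, n, rfl⟩ := ihu
        exact ⟨-m, -n, by simp only [neg_zsmul]; abel⟩
    have hsurj : Function.Surjective
        (fun mn : Fin p × Fin p => ((mn.1 : ℕ) : ℤ) • x + ((mn.2 : ℕ) : ℤ) • y) := by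
      intro z
      obtain ⟨m, n, rfl⟩ := hdec2 z
      have hppos : (0:ℤ) < (p:ℤ) := by exact_mod_cast hp.pos
      refine ⟨⟨⟨(m % p).toNat, ?_⟩, ⟨(n % p).toNat, ?_⟩⟩, ?_⟩
      · have := Int.emod_lt_of_pos m hppos
        omega
      · have := Int.emod_lt_of_pos n hppos
        omega
      · have hm0 : 0 ≤ m % (p:ℤ) := Int.emod_nonneg m hppos.ne'
        have hn0 : 0 ≤ n % (p:ℤ) := Int.emod_nonneg n hppos.ne'
        simp only [Int.toNat_of_nonneg hm0, Int.toNat_of_nonneg hn0]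
        have h1 : (m % p) • x = m • x := by
          have : (m % p - m) • x = 0 := by
            refine hkill _ _ hx ⟨-(m / p), ?_⟩
            rw [Int.emod_def]; ring
          rw [sub_zsmul] at this
          exact add_neg_eq_zero.mp this
        have h2 : (n % p) • y = n • y := by
          have : (n % p - n) • y = 0 := by
            refine hkill _ _ hy ⟨-(n / p), ?_⟩
            rw [Int.emod_def]; ring
          rw [sub_zsmul] at this
          exact add_neg_eq_zero.mp this
        rw [h1, h2]
    have hle := Nat.card_le_card_of_surjective _ hsurj
    rw [hcard, Nat.card_prod, Nat.card_eq_fintype_card, Fintype.card_fin] at hle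
    nlinarith [hp.pos]
  -- general element kills c on the left is 0; helper for right-ideal property
  have hRI : ∀ S : AddSubgroup R,
      (∀ x ∈ S, x * a ∈ S) → (∀ x ∈ S, x * b ∈ S) → (∀ x ∈ S, x * c ∈ S) →
      IsRightIdeal S := by
    intro S h1 h2 h3 r x hx
    obtain ⟨α, β, γ, rfl⟩ := hdec r
    rw [mul_add, mul_add, mul_smul_comm, mul_smul_comm, mul_smul_comm]
    exact S.add_mem (S.add_mem (S.zsmul_mem (h1 _ hx) _) (S.zsmul_mem (h2 _ hx) _))
      (S.zsmul_mem (h3 _ hx) _)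
  have hmulgen : ∀ (T : Set R) (d : R), (∀ t ∈ T, t * d ∈ AddSubgroup.closure T) →
      ∀ x ∈ AddSubgroup.closure T, x * d ∈ AddSubgroup.closure T := by
    intro T d hT x hx
    induction hx using AddSubgroup.closure_induction with
    | mem y hy => exact hT y hy
    | zero => rw [zero_mul]; exact zero_mem _
    | add u v _ _ ihu ihv => rw [add_mul]; exact add_mem ihu ihv
    | neg u _ ihu => rw [neg_mul]; exact neg_mem ihu
  -- the covering ideals
  set J : AddSubgroup R := AddSubgroup.closure {b, c} with hJ
  have hbJ : b ∈ J := AddSubgroup.subset_closure (Or.inl rfl)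
  have hcJ : c ∈ J := AddSubgroup.subset_closure (Or.inr rfl)
  set I : Fin p → AddSubgroup R :=
    fun k => AddSubgroup.closure {a + ((k : ℕ) : ℤ) • b, c} with hI
  have hgI : ∀ k, a + ((k : ℕ) : ℤ) • b ∈ I k :=
    fun k => AddSubgroup.subset_closure (Or.inl rfl)
  have hcI : ∀ k, c ∈ I k := fun k => AddSubgroup.subset_closure (Or.inr rfl)
  constructor
  · refine ⟨Fin.cases J I, ?_, ?_⟩
    · intro i
      refine Fin.cases ?_ ?_ i
      · constructor
        · refine hRI J ?_ ?_ ?_ <;> intro x hx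
          · refine hmulgen _ a ?_ x hx
            rintro t (rfl | rfl)
            · rw [hba]; exact hbJ
            · rw [hca]; exact zero_mem _
          · refine hmulgen _ b ?_ x hx
            rintro t (rfl | rfl)
            · rw [hbb]; exact zero_mem _
            · rw [hcb]; exact zero_mem _
          · refine hmulgen _ c ?_ x hx
            rintro t (rfl | rfl)
            · rw [hbc]; exact zero_mem _
            · rw [hcc]; exact zero_mem _
        · exact hsmall b c hb hc
      · intro k
        simp only [Fin.cases_succ]
        have hgmul_a : (a + ((k : ℕ) : ℤ) • b) * a = a + ((k : ℕ) : ℤ) • b := by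
          rw [add_mul, smul_mul_assoc, haa, hba]
        have hgmul_b : (a + ((k : ℕ) : ℤ) • b) * b = 0 := by
          rw [add_mul, smul_mul_assoc, hab, hbb, smul_zero, add_zero]
        have hgmul_c : (a + ((k : ℕ) : ℤ) • b) * c = c := by
          rw [add_mul, smul_mul_assoc, hac, hbc, smul_zero, add_zero]
        constructor
        · refine hRI (I k) ?_ ?_ ?_ <;> intro x hx
          · refine hmulgen _ a ?_ x hx
            rintro t (rfl | rfl)
            · rw [hgmul_a]; exact hgI k
            · rw [hca]; exact zero_mem _
          · refine hmulgen _ b ?_ x hx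
            rintro t (rfl | rfl)
            · rw [hgmul_b]; exact zero_mem _
            · rw [hcb]; exact zero_mem _
          · refine hmulgen _ c ?_ x hx
            rintro t (rfl | rfl)
            · rw [hgmul_c]; exact hcI k
            · rw [hcc]; exact zero_mem _
        · refine hsmall _ c ?_ hc
          rw [smul_add, ha, zero_add, smul_comm, hb, smul_zero]
    · intro x
      obtain ⟨α, β, γ, rfl⟩ := hdec x
      by_cases hα : (p : ℤ) ∣ α
      · refine ⟨0, ?_⟩
        show _ ∈ J
        rw [hkill α a ha hα, zero_add]
        exact add_mem (J.zsmul_mem hbJ β) (J.zsmul_mem hcJ γ)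
      · have hα' : ((α : ZMod p)) ≠ 0 := by
          rwa [Ne, ZMod.intCast_zmod_eq_zero_iff_dvd]
        set u : ZMod p := (β : ZMod p) * (α : ZMod p)⁻¹ with hu
        refine ⟨Fin.succ ⟨u.val, ZMod.val_lt u⟩, ?_⟩
        simp only [Fin.cases_succ]
        have hdvd : (p : ℤ) ∣ (β - α * (u.val : ℤ)) := by
          rw [← ZMod.intCast_zmod_eq_zero_iff_dvd]
          push_cast
          have huv : ((u.val : ℕ) : ZMod p) = u := by rw [ZMod.natCast_val, ZMod.cast_id]
          rw [huv, hu]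
          field_simp
          simp
        have hzero : ((β - α * (u.val : ℤ))) • b = 0 := hkill _ b hb hdvd
        have heq : α • a + β • b + γ • c
            = α • (a + ((u.val : ℕ) : ℤ) • b) + γ • c := by
          rw [smul_add, smul_smul]
          rw [sub_zsmul] at hzero
          rw [add_neg_eq_zero.mp hzero]
        rw [heq]
        exact add_mem ((I _).zsmul_mem (hgI _) α) ((I _).zsmul_mem (hcI _) γ)
  -- lower bound
  · rintro ⟨f, hf, hcov⟩
    have hfin : Finite R := Nat.finite_of_card_ne_zero (by rw [hcard]; positivity)
    have := Fintype.ofFinite R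
    have hle : ∀ i, Nat.card (f i) ≤ p ^ 2 := by
      intro i
      have hdvd := AddSubgroup.card_addSubgroup_dvd_card (f i)
      rw [hcard] at hdvd
      obtain ⟨k, hk, hek⟩ := (Nat.dvd_prime_pow hp).mp hdvd
      have hk2 : k ≤ 2 := by
        by_contra h
        have h3 : k = 3 := by omega
        subst h3
        exact (hf i).2 (AddSubgroup.eq_top_of_card_eq _ (by rw [hcard, hek]))
      rw [hek]
      exact Nat.pow_le_pow_right hp.pos hk2
    set t : Fin p → Finset R := fun i => Set.toFinset (f i : Set R) with ht
    have htc : ∀ i, (t i).card = Nat.card (f i) := by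
      intro i
      rw [ht, Set.toFinset_card, Nat.card_eq_fintype_card]
      exact Fintype.card_congr (Equiv.refl _)
    have h0t : ∀ i, (0 : R) ∈ t i := by
      intro i
      rw [ht, Set.mem_toFinset]
      exact zero_mem _
    have hsub : (Finset.univ.erase (0 : R)) ⊆
        Finset.univ.biUnion (fun i => (t i).erase 0) := by
      intro z hz
      obtain ⟨i, hi⟩ := hcov z
      refine Finset.mem_biUnion.mpr ⟨i, Finset.mem_univ i, ?_⟩
      rw [Finset.mem_erase] at hz ⊢
      exact ⟨hz.1, by rw [ht, Set.mem_toFinset]; exact hi⟩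
    have hcardR : Fintype.card R = p ^ 3 := by
      rw [← Nat.card_eq_fintype_card, hcard]
    have h1 : p ^ 3 - 1 ≤ p * (p ^ 2 - 1) := by
      calc p ^ 3 - 1 = (Finset.univ.erase (0 : R)).card := by
            rw [Finset.card_erase_of_mem (Finset.mem_univ _), Finset.card_univ, hcardR]
        _ ≤ (Finset.univ.biUnion (fun i => (t i).erase 0)).card :=
            Finset.card_le_card hsub
        _ ≤ ∑ i, ((t i).erase 0).card := Finset.card_biUnion_le
        _ ≤ ∑ _i : Fin p, (p ^ 2 - 1) := by
            refine Finset.sum_le_sum fun i _ => ?_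
            rw [Finset.card_erase_of_mem (h0t i), htc]
            exact Nat.sub_le_sub_right (hle i) 1
        _ = p * (p ^ 2 - 1) := by
            rw [Finset.sum_const, Finset.card_univ, Fintype.card_fin, smul_eq_mul]
    have hq1 : 1 ≤ p ^ 2 := Nat.one_le_pow _ _ hp.pos
    have hq3 : 1 ≤ p ^ 3 := Nat.one_le_pow _ _ hp.pos
    zify [hq1, hq3] at h1
    have : ((p : ℤ)) ^ 3 = p * p ^ 2 := by ring
    nlinarith [h1, (by exact_mod_cast hp2 : (2:ℤ) ≤ p)]
end

section
/- Let R be a ring. Then R is the union of 3 proper two-sided ideals but not the union of 2 proper two-sided ideals if and only if there exists a two-sided ideal I of R such that the quotient ring R/I has exactly 4 elements, x + x = 0 for every x ∈ R/I, and x·y = 0 for all x, y ∈ R/I. -/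
private lemma fin3_cover : ∀ i j k m : Fin 3, i ≠ j → j ≠ k → i ≠ k →
    (m = i ∨ m = j ∨ m = k) := by decide

private lemma fin3_exists : ∀ i : Fin 3, ∃ j k : Fin 3, i ≠ j ∧ j ≠ k ∧ i ≠ k := by decide

private lemma fin2_cases : ∀ i : Fin 2, i = 0 ∨ i = 1 := by decide

/-- No group is the union of two proper subgroups. -/
private lemma two_cover_top {G : Type*} [AddGroup G] (A B : AddSubgroup G)
    (h : ∀ x, x ∈ A ∨ x ∈ B) : A = ⊤ ∨ B = ⊤ := by
  by_contra hc
  push_neg at hc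
  obtain ⟨hA, hB⟩ := hc
  obtain ⟨a, ha⟩ : ∃ a, a ∉ A := by
    by_contra h'
    push_neg at h'
    exact hA (AddSubgroup.eq_top_iff' A |>.2 h')
  obtain ⟨b, hb⟩ : ∃ b, b ∉ B := by
    by_contra h'
    push_neg at h'
    exact hB (AddSubgroup.eq_top_iff' B |>.2 h')
  have haB : a ∈ B := (h a).resolve_left ha
  have hbA : b ∈ A := (h b).resolve_right hb
  rcases h (a + b) with hab | hab
  · refine ha ?_
    have heq : a = (a + b) - b := by rw [add_sub_cancel_right]
    rw [heq]; exact A.sub_mem hab hbA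
  · refine hb ?_
    have heq : b = -a + (a + b) := by rw [neg_add_cancel_left]
    rw [heq]; exact B.add_mem (B.neg_mem haB) hab

/-- A ring has two-sided ideal covering number exactly 3 if and only if it has a
factor ring of order 4 with elementary abelian additive group and zero
multiplication. -/
theorem two_sided_ideal_covering_number_eq_three (R : Type*) [NonUnitalRing R] :
    ((∃ f : Fin 3 → AddSubgroup R,
        (∀ i, IsTwoSidedIdeal (f i) ∧ f i ≠ ⊤) ∧ ∀ x : R, ∃ i, x ∈ f i) ∧
      ¬ ∃ f : Fin 2 → AddSubgroup R,
        (∀ i, IsTwoSidedIdeal (f i) ∧ f i ≠ ⊤) ∧ ∀ x : R, ∃ i, x ∈ f i) ↔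
    ∃ I : TwoSidedIdeal R,
      Nat.card I.ringCon.Quotient = 4 ∧
      (∀ x : I.ringCon.Quotient, x + x = 0) ∧
      (∀ x y : I.ringCon.Quotient, x * y = 0) := by
  constructor
  · rintro ⟨⟨f, hf, hcov⟩, h2⟩
    -- Step 1: irredundancy
    have irr : ∀ i : Fin 3, ∃ y, y ∈ f i ∧ ∀ j, j ≠ i → y ∉ f j := by
      intro i
      by_contra hc
      push_neg at hc
      obtain ⟨j, k, hij, hjk, hik⟩ := fin3_exists i
      apply h2
      refine ⟨![f j, f k], fun m => ?_, ?_⟩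
      · rcases fin2_cases m with rfl | rfl
        · exact ⟨(hf j).1, (hf j).2⟩
        · exact ⟨(hf k).1, (hf k).2⟩
      · intro x
        obtain ⟨m, hm⟩ := hcov x
        rcases fin3_cover i j k m hij hjk hik with h | h | h
        · rw [h] at hm
          obtain ⟨j', hj'i, hj'⟩ := hc x hm
          rcases fin3_cover i j k j' hij hjk hik with h' | h' | h'
          · exact absurd h' hj'i
          · rw [h'] at hj'; exact ⟨0, hj'⟩
          · rw [h'] at hj'; exact ⟨1, hj'⟩
        · rw [h] at hm; exact ⟨0, hm⟩
        · rw [h] at hm; exact ⟨1, hm⟩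
    choose y hy hy' using irr
    -- Step 2: pairwise intersections are in all three
    have pairN : ∀ i j : Fin 3, i ≠ j → ∀ x, x ∈ f i → x ∈ f j → ∀ m, x ∈ f m := by
      intro i j hij x hxi hxj m
      by_cases hmi : m = i
      · exact hmi ▸ hxi
      by_cases hmj : m = j
      · exact hmj ▸ hxj
      obtain ⟨l, hl⟩ := hcov (x + y m)
      rcases fin3_cover i j m l hij (fun h => hmj h.symm) (fun h => hmi h.symm) with h | h | h
      · rw [h] at hl
        have hym : y m ∈ f i := by
          have heq : y m = (x + y m) - x := by abel
          rw [heq]; exact (f i).sub_mem hl hxi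
        exact absurd hym (hy' m i (fun h => hmi h.symm))
      · rw [h] at hl
        have hym : y m ∈ f j := by
          have heq : y m = (x + y m) - x := by abel
          rw [heq]; exact (f j).sub_mem hl hxj
        exact absurd hym (hy' m j (fun h => hmj h.symm))
      · rw [h] at hl
        have heq : x = (x + y m) - y m := by abel
        rw [heq]; exact (f m).sub_mem hl (hy m)
    -- Step 3: cross lemma
    have cross : ∀ i j k : Fin 3, i ≠ j → j ≠ k → i ≠ k →
        ∀ x, x ∈ f i → x ∉ f j → x ∉ f k → x + y j ∈ f k := by
      intro i j k hij hjk hik x hxi hxj hxk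
      obtain ⟨m, hm⟩ := hcov (x + y j)
      rcases fin3_cover i j k m hij hjk hik with h | h | h
      · rw [h] at hm
        have hyj : y j ∈ f i := by
          have heq : y j = (x + y j) - x := by abel
          rw [heq]; exact (f i).sub_mem hm hxi
        exact absurd hyj (hy' j i hij)
      · rw [h] at hm
        have hx : x ∈ f j := by
          have heq : x = (x + y j) - y j := by abel
          rw [heq]; exact (f j).sub_mem hm (hy j)
        exact absurd hx hxj
      · rw [h] at hm; exact hm
    -- Step 4: coset lemma
    have coset : ∀ i : Fin 3, ∀ x, x ∈ f i →
        (∀ m, x ∈ f m) ∨ (∀ m, x - y i ∈ f m) := by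
      intro i x hxi
      by_cases hall : ∀ m, x ∈ f m
      · exact Or.inl hall
      right
      push_neg at hall
      obtain ⟨j0, hj0⟩ := hall
      have hnot : ∀ j, j ≠ i → x ∉ f j := fun j hj hxj =>
        hj0 (pairN i j (fun h => hj h.symm) x hxi hxj j0)
      obtain ⟨j, k, hij, hjk, hik⟩ := fin3_exists i
      have h1 : x + y j ∈ f k :=
        cross i j k hij hjk hik x hxi (hnot j (Ne.symm hij)) (hnot k (Ne.symm hik))
      have h2 : y i + y j ∈ f k :=
        cross i j k hij hjk hik (y i) (hy i) (hy' i j (Ne.symm hij)) (hy' i k (Ne.symm hik))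
      have h3 : x - y i ∈ f k := by
        have heq : x - y i = (x + y j) - (y i + y j) := by abel
        rw [heq]; exact (f k).sub_mem h1 h2
      have h4 : x - y i ∈ f i := (f i).sub_mem hxi (hy i)
      exact pairN i k hik (x - y i) h4 h3
    -- Step 5: 2x is in all three
    have two_mem : ∀ x : R, ∀ m, x + x ∈ f m := by
      have hyy : ∀ i : Fin 3, ∀ m, y i + y i ∈ f m := by
        intro i
        rcases coset i (y i + y i) ((f i).add_mem (hy i) (hy i)) with h | h
        · exact h
        · obtain ⟨j, k, hij, hjk, hik⟩ := fin3_exists i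
          have hyi : y i ∈ f j := by
            have heq : y i = (y i + y i) - y i := by abel
            rw [heq]; exact h j
          exact absurd hyi (hy' i j (Ne.symm hij))
      intro x
      obtain ⟨i, hxi⟩ := hcov x
      rcases coset i x hxi with h | h
      · exact fun m => (f m).add_mem (h m) (h m)
      · intro m
        have heq : x + x = (x - y i) + (x - y i) + (y i + y i) := by abel
        rw [heq]
        exact (f m).add_mem ((f m).add_mem (h m) (h m)) (hyy i m)
    -- Step 6: all products are in all three
    have mul_mem_all : ∀ a b : R, ∀ m, a * b ∈ f m := by
      have hyy : ∀ i : Fin 3, ∀ m, y i * y i ∈ f m := by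
        intro i m
        obtain ⟨j, k, hij, hjk, hik⟩ := fin3_exists i
        have hsum : y i + y j ∈ f k :=
          cross i j k hij hjk hik (y i) (hy i) (hy' i j (Ne.symm hij)) (hy' i k (Ne.symm hik))
        have h1 : y i * (y i + y j) ∈ f i := (hf i).1.2 (y i + y j) (hy i)
        have h2 : y i * (y i + y j) ∈ f k := (hf k).1.1 (y i) hsum
        have h3 := pairN i k hik _ h1 h2
        have h4 : y i * y j ∈ f i := (hf i).1.2 (y j) (hy i)
        have h5 : y i * y j ∈ f j := (hf j).1.1 (y i) (hy j)
        have h6 := pairN i j hij _ h4 h5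
        have heq : y i * y i = y i * (y i + y j) - y i * y j := by
          rw [mul_add]; abel
        rw [heq]
        exact (f m).sub_mem (h3 m) (h6 m)
      have hyij : ∀ i j : Fin 3, ∀ m, y i * y j ∈ f m := by
        intro i j m
        by_cases hij : i = j
        · exact hij ▸ hyy i m
        · have h4 : y i * y j ∈ f i := (hf i).1.2 (y j) (hy i)
          have h5 : y i * y j ∈ f j := (hf j).1.1 (y i) (hy j)
          exact pairN i j hij _ h4 h5 m
      intro a b m
      obtain ⟨i, hai⟩ := hcov a
      obtain ⟨j, hbj⟩ := hcov b
      rcases coset i a hai with ha | ha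
      · exact (hf m).1.2 b (ha m)
      rcases coset j b hbj with hb | hb
      · exact (hf m).1.1 a (hb m)
      have key : a * b = (a - y i) * b + y i * (b - y j) + y i * y j := by
        rw [sub_mul, mul_sub]; abel
      rw [key]
      exact (f m).add_mem
        ((f m).add_mem ((hf m).1.2 b (ha m)) ((hf m).1.1 (y i) (hb m))) (hyij i j m)
    -- Step 7: build the two-sided ideal
    refine ⟨TwoSidedIdeal.mk' {x : R | ∀ m, x ∈ f m}
      (fun m => (f m).zero_mem)
      (fun hx hy m => (f m).add_mem (hx m) (hy m))
      (fun hx m => (f m).neg_mem (hx m))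
      (fun {x y} _ => mul_mem_all x y)
      (fun {x y} _ => mul_mem_all x y), ?_, ?_, ?_⟩ <;>
      set I : TwoSidedIdeal R := TwoSidedIdeal.mk' {x : R | ∀ m, x ∈ f m} _ _ _ _ _ with hI
    all_goals
      have hQeq : ∀ a b : R,
          ((a : I.ringCon.Quotient) = (b : I.ringCon.Quotient)) ↔ ∀ m, a - b ∈ f m := by
        intro a b
        rw [RingCon.eq, TwoSidedIdeal.rel_iff, hI, TwoSidedIdeal.mem_mk']
        exact Iff.rfl
      have hsurj : ∀ q : I.ringCon.Quotient, ∃ r : R, (r : I.ringCon.Quotient) = q :=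
        fun q => ⟨Quotient.out q, Quotient.out_eq' q⟩
    · -- cardinality
      have h0 : ∀ i : Fin 3, (y i : I.ringCon.Quotient) ≠ 0 := by
        intro i h
        rw [show (0 : I.ringCon.Quotient) = ((0 : R) : I.ringCon.Quotient) from rfl, hQeq] at h
        obtain ⟨j, k, hij, hjk, hik⟩ := fin3_exists i
        exact hy' i j (Ne.symm hij) (by simpa using h j)
      have hne : ∀ i j : Fin 3, i ≠ j →
          (y i : I.ringCon.Quotient) ≠ (y j : I.ringCon.Quotient) := by
        intro i j hij h
        rw [hQeq] at h
        have h1 : y i - y j ∈ f j := h j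
        have h2 : y i ∈ f j := by
          have heq : y i = (y i - y j) + y j := by abel
          rw [heq]; exact (f j).add_mem h1 (hy j)
        exact hy' i j (Ne.symm hij) h2
      have huniv : (Set.univ : Set I.ringCon.Quotient) =
          {0, (y 0 : I.ringCon.Quotient), (y 1 : I.ringCon.Quotient),
            (y 2 : I.ringCon.Quotient)} := by
        ext q
        simp only [Set.mem_univ, true_iff, Set.mem_insert_iff, Set.mem_singleton_iff]
        obtain ⟨a, rfl⟩ := hsurj q
        obtain ⟨i, hai⟩ := hcov a
        rcases coset i a hai with h | h
        · left
          rw [show (0 : I.ringCon.Quotient) = ((0 : R) : I.ringCon.Quotient) from rfl, hQeq]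
          intro m; simpa using h m
        · have heq : (a : I.ringCon.Quotient) = (y i : I.ringCon.Quotient) := (hQeq _ _).2 h
          rcases fin3_cover 0 1 2 i (by decide) (by decide) (by decide) with rfl | rfl | rfl
          · exact Or.inr (Or.inl heq)
          · exact Or.inr (Or.inr (Or.inl heq))
          · exact Or.inr (Or.inr (Or.inr heq))
      rw [← Set.ncard_univ, huniv]
      rw [Set.ncard_insert_of_notMem (by
            simp only [Set.mem_insert_iff, Set.mem_singleton_iff, not_or]
            exact ⟨(h0 0).symm ∘ Eq.symm ∘ Eq.symm, (h0 1).symm ∘ Eq.symm ∘ Eq.symm,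
              (h0 2).symm ∘ Eq.symm ∘ Eq.symm⟩)
          (((Set.finite_singleton _).insert _).insert _),
        Set.ncard_insert_of_notMem (by
            simp only [Set.mem_insert_iff, Set.mem_singleton_iff, not_or]
            exact ⟨hne 0 1 (by decide), hne 0 2 (by decide)⟩)
          ((Set.finite_singleton _).insert _),
        Set.ncard_pair (hne 1 2 (by decide))]
    · -- additive exponent 2
      intro x
      obtain ⟨a, rfl⟩ := hsurj x
      calc (a : I.ringCon.Quotient) + a = ((a + a : R) : I.ringCon.Quotient) := rfl
        _ = ((0 : R) : I.ringCon.Quotient) := by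
            rw [hQeq]; intro m; simpa using two_mem a m
        _ = 0 := rfl
    · -- zero multiplication
      intro x z
      obtain ⟨a, rfl⟩ := hsurj x
      obtain ⟨b, rfl⟩ := hsurj z
      calc (a : I.ringCon.Quotient) * b = ((a * b : R) : I.ringCon.Quotient) := rfl
        _ = ((0 : R) : I.ringCon.Quotient) := by
            rw [hQeq]; intro m; simpa using mul_mem_all a b m
        _ = 0 := rfl
  · rintro ⟨I, hcard, hadd, hmul⟩
    have hfin : Finite I.ringCon.Quotient := Nat.finite_of_card_ne_zero (by omega)
    have hneg : ∀ x : I.ringCon.Quotient, -x = x := fun x =>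
      neg_eq_of_add_eq_zero_left (hadd x)
    have hnt : Nontrivial I.ringCon.Quotient :=
      Finite.one_lt_card_iff_nontrivial.mp (by omega)
    obtain ⟨a, ha⟩ := exists_ne (0 : I.ringCon.Quotient)
    obtain ⟨b, hb0, hba⟩ : ∃ b : I.ringCon.Quotient, b ≠ 0 ∧ b ≠ a := by
      by_contra hc
      push_neg at hc
      have huniv : (Set.univ : Set I.ringCon.Quotient) = {0, a} := by
        ext q
        simp only [Set.mem_univ, true_iff, Set.mem_insert_iff, Set.mem_singleton_iff]
        rcases eq_or_ne q 0 with h | h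
        · exact Or.inl h
        · exact Or.inr (hc q h)
      have h4 : (4 : ℕ) = ({0, a} : Set I.ringCon.Quotient).ncard := by
        rw [← huniv, Set.ncard_univ, hcard]
      have hle : ({0, a} : Set I.ringCon.Quotient).ncard ≤ 2 :=
        (Set.ncard_insert_le _ _).trans (by simp)
      omega
    have hc0 : a + b ≠ 0 := by
      intro h
      have : b = -a := eq_neg_of_add_eq_zero_right h
      rw [hneg] at this
      exact hba this
    have hca : a + b ≠ a := fun h => hb0 (by simpa using h)
    have hcb : a + b ≠ b := fun h => ha (by simpa using h)
    have huniv : ∀ q : I.ringCon.Quotient, q = 0 ∨ q = a ∨ q = b ∨ q = a + b := by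
      have hset : ({0, a, b, a + b} : Set I.ringCon.Quotient) = Set.univ := by
        apply Set.eq_of_subset_of_ncard_le (Set.subset_univ _)
        rw [Set.ncard_univ, hcard,
          Set.ncard_insert_of_notMem (by
              simp only [Set.mem_insert_iff, Set.mem_singleton_iff, not_or]
              exact ⟨Ne.symm ha, Ne.symm hb0, Ne.symm hc0⟩)
            (((Set.finite_singleton _).insert _).insert _),
          Set.ncard_insert_of_notMem (by
              simp only [Set.mem_insert_iff, Set.mem_singleton_iff, not_or]
              exact ⟨Ne.symm hba, Ne.symm hca⟩)
            ((Set.finite_singleton _).insert _),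
          Set.ncard_pair (Ne.symm hcb)]
      intro q
      have : q ∈ ({0, a, b, a + b} : Set I.ringCon.Quotient) := hset ▸ Set.mem_univ q
      simpa only [Set.mem_insert_iff, Set.mem_singleton_iff] using this
    have hsurj : ∀ q : I.ringCon.Quotient, ∃ r : R, (r : I.ringCon.Quotient) = q :=
      fun q => ⟨Quotient.out q, Quotient.out_eq' q⟩
    -- subgroups of R attached to elements of the quotient
    have mkI : ∀ q : I.ringCon.Quotient, ∃ A : AddSubgroup R,
        ∀ x : R, x ∈ A ↔ ((x : I.ringCon.Quotient) = 0 ∨ (x : I.ringCon.Quotient) = q) := by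
      intro q
      refine ⟨{ carrier := {x : R | (x : I.ringCon.Quotient) = 0 ∨ (x : I.ringCon.Quotient) = q}
                zero_mem' := Or.inl rfl
                add_mem' := ?_
                neg_mem' := ?_ }, fun x => Iff.rfl⟩
      · rintro x y hx hy
        simp only [Set.mem_setOf_eq, RingCon.coe_add] at *
        rcases hx with hx | hx <;> rcases hy with hy | hy
        · left; rw [hx, hy, add_zero]
        · right; rw [hx, hy, zero_add]
        · right; rw [hx, hy, add_zero]
        · left; rw [hx, hy, hadd]
      · rintro x hx
        simp only [Set.mem_setOf_eq, RingCon.coe_neg] at *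
        rcases hx with hx | hx
        · left; rw [hx, neg_zero]
        · right; rw [hx, hneg]
    choose g hg using mkI
    have hgIdeal : ∀ q, IsTwoSidedIdeal (g q) := by
      intro q
      constructor
      · intro r x hx
        rw [hg]
        left
        show ((r * x : R) : I.ringCon.Quotient) = 0
        rw [RingCon.coe_mul]
        exact hmul _ _
      · intro r x hx
        rw [hg]
        left
        show ((x * r : R) : I.ringCon.Quotient) = 0
        rw [RingCon.coe_mul]
        exact hmul _ _
    have hgne : ∀ q q' : I.ringCon.Quotient, q' ≠ 0 → q' ≠ q → g q ≠ ⊤ := by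
      intro q q' h0 hq h
      obtain ⟨x, hx⟩ := hsurj q'
      have hxmem : x ∈ g q := h ▸ AddSubgroup.mem_top x
      rcases (hg q x).1 hxmem with h' | h'
      · exact h0 (hx ▸ h')
      · exact hq (hx ▸ h')
    constructor
    · refine ⟨![g a, g b, g (a + b)], fun i => ?_, fun x => ?_⟩
      · rcases fin3_cover 0 1 2 i (by decide) (by decide) (by decide) with rfl | rfl | rfl
        · exact ⟨hgIdeal a, hgne a b hb0 hba⟩
        · exact ⟨hgIdeal b, hgne b a ha (Ne.symm hba)⟩
        · exact ⟨hgIdeal (a + b), hgne (a + b) a ha (Ne.symm hca)⟩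
      · rcases huniv (x : I.ringCon.Quotient) with h | h | h | h
        · exact ⟨0, (hg a x).2 (Or.inl h)⟩
        · exact ⟨0, (hg a x).2 (Or.inr h)⟩
        · exact ⟨1, (hg b x).2 (Or.inr h)⟩
        · exact ⟨2, (hg (a + b) x).2 (Or.inr h)⟩
    · rintro ⟨f, hf, hcov⟩
      have hc : ∀ x, x ∈ f 0 ∨ x ∈ f 1 := by
        intro x
        obtain ⟨i, hi⟩ := hcov x
        rcases fin2_cases i with rfl | rfl
        · exact Or.inl hi
        · exact Or.inr hi
      rcases two_cover_top (f 0) (f 1) hc with h | h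
      · exact (hf 0).2 h
      · exact (hf 1).2 h
end

section
/- Let R be a ring. Then R is the union of 3 proper left ideals but not the union of 2 proper left ideals if and only if there exists a two-sided ideal I of R such that the quotient ring R/I has exactly 4 elements, x + x = 0 for every x ∈ R/I, and either (i) x·y = 0 for all x, y ∈ R/I, or (ii) R/I contains elements a, b additively generating R/I with a² = a, b² = b, ab = b, ba = a. -/
namespace LICN

lemma card_four {α : Type*} {w x y z : α}
    (hwx : w ≠ x) (hwy : w ≠ y) (hwz : w ≠ z) (hxy : x ≠ y) (hxz : x ≠ z) (hyz : y ≠ z)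
    (hall : ∀ q : α, q = w ∨ q = x ∨ q = y ∨ q = z) : Nat.card α = 4 := by
  classical
  have hf : Function.Surjective (![w, x, y, z] : Fin 4 → α) := by
    intro q
    rcases hall q with h | h | h | h
    exacts [⟨0, h.symm⟩, ⟨1, h.symm⟩, ⟨2, h.symm⟩, ⟨3, h.symm⟩]
  have hfin : Finite α := Finite.of_surjective _ hf
  have := Fintype.ofFinite α
  rw [Nat.card_eq_fintype_card, ← Finset.card_univ]
  have huniv : (Finset.univ : Finset α) = {w, x, y, z} := by
    ext q; simpa using hall q
  rw [huniv, Finset.card_insert_of_notMem (by simp [hwx, hwy, hwz]),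
    Finset.card_insert_of_notMem (by simp [hxy, hxz]),
    Finset.card_insert_of_notMem (by simp [hyz]), Finset.card_singleton]

lemma four_cover {α : Type*} (hcard : Nat.card α = 4) {w x y z : α}
    (hwx : w ≠ x) (hwy : w ≠ y) (hwz : w ≠ z) (hxy : x ≠ y) (hxz : x ≠ z) (hyz : y ≠ z) :
    ∀ q : α, q = w ∨ q = x ∨ q = y ∨ q = z := by
  classical
  have hfin : Finite α := (Nat.card_pos_iff.mp (by omega)).2
  have := Fintype.ofFinite α
  intro q
  by_contra h
  push_neg at h
  obtain ⟨h1, h2, h3, h4⟩ := h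
  have h5 : ({q, w, x, y, z} : Finset α).card = 5 := by
    rw [Finset.card_insert_of_notMem (by simp [h1, h2, h3, h4]),
      Finset.card_insert_of_notMem (by simp [hwx, hwy, hwz]),
      Finset.card_insert_of_notMem (by simp [hxy, hxz]),
      Finset.card_insert_of_notMem (by simp [hyz]), Finset.card_singleton]
  have h6 := Finset.card_le_univ ({q, w, x, y, z} : Finset α)
  rw [← Nat.card_eq_fintype_card, hcard, h5] at h6
  omega

lemma card_le_two {α : Type*} {u v : α} (hall : ∀ q : α, q = u ∨ q = v) :
    Nat.card α ≤ 2 := by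
  have hf : Function.Surjective (![u, v] : Fin 2 → α) := by
    intro q; rcases hall q with h | h
    exacts [⟨0, h.symm⟩, ⟨1, h.symm⟩]
  calc Nat.card α ≤ Nat.card (Fin 2) := Nat.card_le_card_of_surjective _ hf
  _ = 2 := by simp

/-- the subgroup `{0, x}` of an additive group in which `x + x = 0`. -/
def pairSub {Q : Type*} [NonUnitalNonAssocRing Q] (x : Q) (hx : x + x = 0) : AddSubgroup Q where
  carrier := {0, x}
  zero_mem' := Or.inl rfl
  add_mem' := by rintro p q (rfl | rfl) (rfl | rfl) <;> simp [hx]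
  neg_mem' := by
    rintro p (rfl | rfl)
    · simp
    · simp [neg_eq_of_add_eq_zero_left hx]

lemma mem_pairSub {Q : Type*} [NonUnitalNonAssocRing Q] {x g : Q} {hx : x + x = 0} :
    g ∈ pairSub x hx ↔ g = 0 ∨ g = x := Iff.rfl


variable {R : Type*} [NonUnitalRing R] {X Y Z : AddSubgroup R}

lemma sum_pure (hcov : ∀ g : R, g ∈ X ∨ g ∈ Y ∨ g ∈ Z) {x y : R}
    (hx : x ∈ X) (hxY : x ∉ Y) (hxZ : x ∉ Z)
    (hy : y ∈ Y) (hyX : y ∉ X) (hyZ : y ∉ Z) :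
    x + y ∈ Z ∧ x + y ∉ X ∧ x + y ∉ Y := by
  have h1 : x + y ∉ X := fun h => hyX (by simpa using X.sub_mem h hx)
  have h2 : x + y ∉ Y := fun h => hxY (by simpa using Y.sub_mem h hy)
  rcases hcov (x + y) with h | h | h
  · exact absurd h h1
  · exact absurd h h2
  · exact ⟨h, h1, h2⟩

lemma inter_mem (hcov : ∀ g : R, g ∈ X ∨ g ∈ Y ∨ g ∈ Z) {x g : R}
    (hx : x ∈ X) (hxY : x ∉ Y) (hxZ : x ∉ Z) (hgY : g ∈ Y) (hgZ : g ∈ Z) : g ∈ X := by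
  rcases hcov (x + g) with h | h | h
  · simpa using X.sub_mem h hx
  · exact absurd (by simpa using Y.sub_mem h hgY) hxY
  · exact absurd (by simpa using Z.sub_mem h hgZ) hxZ

lemma pure_diff (hcov : ∀ g : R, g ∈ X ∨ g ∈ Y ∨ g ∈ Z) {x x' y : R}
    (hx : x ∈ X) (hxY : x ∉ Y) (hxZ : x ∉ Z)
    (hx' : x' ∈ X) (hx'Y : x' ∉ Y) (hx'Z : x' ∉ Z)
    (hy : y ∈ Y) (hyX : y ∉ X) (hyZ : y ∉ Z) :
    x - x' ∈ X ∧ x - x' ∈ Y ∧ x - x' ∈ Z := by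
  have hcov' : ∀ g : R, g ∈ Y ∨ g ∈ X ∨ g ∈ Z := fun g => by rcases hcov g with h | h | h <;> tauto
  have h1 := sum_pure hcov' hy hyX hyZ hx hxY hxZ
  have h2 := sum_pure hcov' hy hyX hyZ hx' hx'Y hx'Z
  have hX : x - x' ∈ X := X.sub_mem hx hx'
  have hZ : x - x' ∈ Z := by
    have h := Z.sub_mem h1.1 h2.1
    rwa [show y + x - (y + x') = x - x' by abel] at h
  exact ⟨hX, inter_mem hcov' hy hyX hyZ hX hZ, hZ⟩

lemma two_pure (hcov : ∀ g : R, g ∈ X ∨ g ∈ Y ∨ g ∈ Z) {x y g : R}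
    (hx : x ∈ X) (hxY : x ∉ Y) (hxZ : x ∉ Z)
    (hy : y ∈ Y) (hyX : y ∉ X) (hyZ : y ∉ Z)
    (hg : g ∈ X) (hgY : g ∉ Y) (hgZ : g ∉ Z) :
    g + g ∈ X ∧ g + g ∈ Y ∧ g + g ∈ Z := by
  have hcovXZY : ∀ g : R, g ∈ X ∨ g ∈ Z ∨ g ∈ Y := fun g => by rcases hcov g with h | h | h <;> tauto
  have hcovZXY : ∀ g : R, g ∈ Z ∨ g ∈ X ∨ g ∈ Y := fun g => by rcases hcov g with h | h | h <;> tauto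
  have hz := sum_pure hcov hg hgY hgZ hy hyX hyZ
  have h2 := sum_pure hcovXZY hg hgZ hgY hz.1 hz.2.1 hz.2.2
  have hY : g + g ∈ Y := by
    have h := Y.sub_mem h2.1 hy
    rwa [show g + (g + y) - y = g + g by abel] at h
  have hX : g + g ∈ X := X.add_mem hg hg
  have hxy := sum_pure hcov hx hxY hxZ hy hyX hyZ
  exact ⟨hX, hY, inter_mem hcovZXY hxy.1 hxy.2.1 hxy.2.2 hX hY⟩

lemma no_two_cover : ¬ ∃ f : Fin 2 → AddSubgroup R,
    (∀ i, (∀ (r : R) ⦃x : R⦄, x ∈ f i → r * x ∈ f i) ∧ f i ≠ ⊤) ∧ ∀ x : R, ∃ i, x ∈ f i := by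
  rintro ⟨f, hf, hcov⟩
  have h0 : ∃ x, x ∉ f 0 := by
    by_contra h; push_neg at h; exact (hf 0).2 ((AddSubgroup.eq_top_iff' _).2 h)
  have h1 : ∃ y, y ∉ f 1 := by
    by_contra h; push_neg at h; exact (hf 1).2 ((AddSubgroup.eq_top_iff' _).2 h)
  obtain ⟨x, hx⟩ := h0
  obtain ⟨y, hy⟩ := h1
  have hx1 : x ∈ f 1 := by
    rcases hcov x with ⟨i, hi⟩; fin_cases i
    · exact absurd hi hx
    · exact hi
  have hy0 : y ∈ f 0 := by
    rcases hcov y with ⟨i, hi⟩; fin_cases i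
    · exact hi
    · exact absurd hi hy
  rcases hcov (x + y) with ⟨i, hi⟩
  fin_cases i
  · exact hx (by simpa using (f 0).sub_mem hi hy0)
  · exact hy (by simpa using (f 1).sub_mem hi hx1)


set_option maxHeartbeats 1000000 in
lemma forward {A B C : AddSubgroup R}
    (hAl : ∀ (r : R) ⦃x : R⦄, x ∈ A → r * x ∈ A)
    (hBl : ∀ (r : R) ⦃x : R⦄, x ∈ B → r * x ∈ B)
    (hCl : ∀ (r : R) ⦃x : R⦄, x ∈ C → r * x ∈ C)
    (hcov : ∀ g : R, g ∈ A ∨ g ∈ B ∨ g ∈ C)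
    {a b : R} (haA : a ∈ A) (haB : a ∉ B) (haC : a ∉ C)
    (hbB : b ∈ B) (hbA : b ∉ A) (hbC : b ∉ C) :
    ∃ I : TwoSidedIdeal R,
      Nat.card I.ringCon.Quotient = 4 ∧
      (∀ x : I.ringCon.Quotient, x + x = 0) ∧
      ((∀ x y : I.ringCon.Quotient, x * y = 0) ∨
        ∃ a b : I.ringCon.Quotient, AddSubgroup.closure {a, b} = ⊤ ∧
          a * a = a ∧ b * b = b ∧ a * b = b ∧ b * a = a) := by
  classical
  set N : R → Prop := fun g => g ∈ A ∧ g ∈ B ∧ g ∈ C with hNdef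
  -- permuted covers
  have hcovBAC : ∀ g : R, g ∈ B ∨ g ∈ A ∨ g ∈ C := fun g => by rcases hcov g with h|h|h <;> tauto
  have hcovCAB : ∀ g : R, g ∈ C ∨ g ∈ A ∨ g ∈ B := fun g => by rcases hcov g with h|h|h <;> tauto
  -- z := a + b is pure C
  obtain ⟨hzC, hzA, hzB⟩ := sum_pure hcov haA haB haC hbB hbA hbC
  -- pairwise intersections
  have interBC : ∀ {g : R}, g ∈ B → g ∈ C → g ∈ A := fun hg hg' =>
    inter_mem hcov haA haB haC hg hg'
  have interAC : ∀ {g : R}, g ∈ A → g ∈ C → g ∈ B := fun hg hg' =>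
    inter_mem hcovBAC hbB hbA hbC hg hg'
  have interAB : ∀ {g : R}, g ∈ A → g ∈ B → g ∈ C := fun hg hg' =>
    inter_mem hcovCAB hzC hzA hzB hg hg'
  -- classification
  have classify : ∀ g : R, N g ∨ (g ∈ A ∧ g ∉ B ∧ g ∉ C) ∨ (g ∈ B ∧ g ∉ A ∧ g ∉ C) ∨
      (g ∈ C ∧ g ∉ A ∧ g ∉ B) := by
    intro g
    rcases hcov g with h | h | h
    · by_cases hB : g ∈ B
      · exact Or.inl ⟨h, hB, interAB h hB⟩
      by_cases hC : g ∈ C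
      · exact Or.inl ⟨h, interAC h hC, hC⟩
      exact Or.inr (Or.inl ⟨h, hB, hC⟩)
    · by_cases hA : g ∈ A
      · exact Or.inl ⟨hA, h, interAB hA h⟩
      by_cases hC : g ∈ C
      · exact Or.inl ⟨interBC h hC, h, hC⟩
      exact Or.inr (Or.inr (Or.inl ⟨h, hA, hC⟩))
    · by_cases hA : g ∈ A
      · exact Or.inl ⟨hA, interAC hA h, h⟩
      by_cases hB : g ∈ B
      · exact Or.inl ⟨interBC hB h, hB, h⟩
      exact Or.inr (Or.inr (Or.inr ⟨h, hA, hB⟩))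
  -- difference lemmas
  have diffA : ∀ {g : R}, g ∈ A → g ∉ B → g ∉ C → N (g - a) := by
    intro g h1 h2 h3
    exact pure_diff hcov h1 h2 h3 haA haB haC hbB hbA hbC
  have diffB : ∀ {g : R}, g ∈ B → g ∉ A → g ∉ C → N (g - b) := by
    intro g h1 h2 h3
    obtain ⟨u1, u2, u3⟩ := pure_diff hcovBAC h1 h2 h3 hbB hbA hbC haA haB haC
    exact ⟨u2, u1, u3⟩
  have diffC : ∀ {g : R}, g ∈ C → g ∉ A → g ∉ B → N (g - (a + b)) := by
    intro g h1 h2 h3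
    obtain ⟨u1, u2, u3⟩ := pure_diff hcovCAB h1 h2 h3 hzC hzA hzB haA haC haB
    exact ⟨u2, u3, u1⟩
  -- 2g ∈ N
  have two_mem : ∀ g : R, N (g + g) := by
    intro g
    rcases classify g with h | h | h | h
    · exact ⟨A.add_mem h.1 h.1, B.add_mem h.2.1 h.2.1, C.add_mem h.2.2 h.2.2⟩
    · exact two_pure hcov haA haB haC hbB hbA hbC h.1 h.2.1 h.2.2
    · obtain ⟨u1, u2, u3⟩ := two_pure hcovBAC hbB hbA hbC haA haB haC h.1 h.2.1 h.2.2
      exact ⟨u2, u1, u3⟩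
    · obtain ⟨u1, u2, u3⟩ := two_pure hcovCAB hzC hzA hzB haA haC haB h.1 h.2.1 h.2.2
      exact ⟨u2, u3, u1⟩
  -- N algebra
  have Nzero : N 0 := ⟨A.zero_mem, B.zero_mem, C.zero_mem⟩
  have Nadd : ∀ {u v : R}, N u → N v → N (u + v) := fun h h' =>
    ⟨A.add_mem h.1 h'.1, B.add_mem h.2.1 h'.2.1, C.add_mem h.2.2 h'.2.2⟩
  have Nsub : ∀ {u v : R}, N u → N v → N (u - v) := fun h h' =>
    ⟨A.sub_mem h.1 h'.1, B.sub_mem h.2.1 h'.2.1, C.sub_mem h.2.2 h'.2.2⟩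
  have Nneg : ∀ {u : R}, N u → N (-u) := fun h =>
    ⟨A.neg_mem h.1, B.neg_mem h.2.1, C.neg_mem h.2.2⟩
  have NmulL : ∀ (r : R) {u : R}, N u → N (r * u) := fun r {u} h =>
    ⟨hAl r h.1, hBl r h.2.1, hCl r h.2.2⟩
  -- index-2 property of A
  have negPureB : ∀ {g : R}, g ∈ B → g ∉ A → g ∉ C → (-g ∈ B ∧ -g ∉ A ∧ -g ∉ C) := by
    intro g h1 h2 h3
    exact ⟨B.neg_mem h1, fun h => h2 (by simpa using A.neg_mem h),
      fun h => h3 (by simpa using C.neg_mem h)⟩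
  have negPureC : ∀ {g : R}, g ∈ C → g ∉ A → g ∉ B → (-g ∈ C ∧ -g ∉ A ∧ -g ∉ B) := by
    intro g h1 h2 h3
    exact ⟨C.neg_mem h1, fun h => h2 (by simpa using A.neg_mem h),
      fun h => h3 (by simpa using B.neg_mem h)⟩
  have index2A : ∀ {u v : R}, u ∉ A → v ∉ A → u - v ∈ A := by
    intro u v hu hv
    rcases classify u with h | h | h | h
    · exact absurd h.1 hu
    · exact absurd h.1 hu
    · rcases classify v with h' | h' | h' | h'
      · exact absurd h'.1 hv
      · exact absurd h'.1 hv
      · exact (pure_diff hcovBAC h.1 h.2.1 h.2.2 h'.1 h'.2.1 h'.2.2 haA haB haC).2.1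
      · -- u pure B, v pure C : u + (-v) pure A
        obtain ⟨n1, n2, n3⟩ := negPureC h'.1 h'.2.1 h'.2.2
        have hcovBCA : ∀ g : R, g ∈ B ∨ g ∈ C ∨ g ∈ A := fun g => by
          rcases hcov g with h0|h0|h0 <;> tauto
        have := sum_pure hcovBCA h.1 h.2.2 h.2.1 n1 n3 n2
        rw [sub_eq_add_neg]
        exact this.1
    · rcases classify v with h' | h' | h' | h'
      · exact absurd h'.1 hv
      · exact absurd h'.1 hv
      · obtain ⟨n1, n2, n3⟩ := negPureB h'.1 h'.2.1 h'.2.2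
        have hcovCBA : ∀ g : R, g ∈ C ∨ g ∈ B ∨ g ∈ A := fun g => by
          rcases hcov g with h0|h0|h0 <;> tauto
        have := sum_pure hcovCBA h.1 h.2.2 h.2.1 n1 n3 n2
        rw [sub_eq_add_neg]
        exact this.1
      · exact (pure_diff hcovCAB h.1 h.2.1 h.2.2 h'.1 h'.2.1 h'.2.2 haA haC haB).2.1
  -- the "action" predicates
  set T : R → Prop := fun r => ∀ x : R, N (r * x) with hTdef
  set Sp : R → Prop := fun r => ∀ x : R, N (r * x - x) with hSpdef
  have Tadd : ∀ {r s : R}, T r → T s → T (r + s) := by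
    intro r s hr hs x
    rw [add_mul]
    exact Nadd (hr x) (hs x)
  have TSp : ∀ {r s : R}, T r → Sp s → Sp (r + s) := by
    intro r s hr hs x
    have e : (r + s) * x - x = r * x + (s * x - x) := by rw [add_mul]; abel
    rw [e]; exact Nadd (hr x) (hs x)
  have SpT : ∀ {r s : R}, Sp r → T s → Sp (r + s) := by
    intro r s hr hs x
    have e : (r + s) * x - x = (r * x - x) + s * x := by rw [add_mul]; abel
    rw [e]; exact Nadd (hr x) (hs x)
  have SpSp : ∀ {r s : R}, Sp r → Sp s → T (r + s) := by
    intro r s hr hs x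
    have e : (r + s) * x = (r * x - x) + ((s * x - x) + (x + x)) := by rw [add_mul]; abel
    rw [e]; exact Nadd (hr x) (Nadd (hs x) (two_mem x))
  have Tneg : ∀ {r : R}, T r → T (-r) := by
    intro r hr x
    rw [neg_mul]
    exact Nneg (hr x)
  have Spneg : ∀ {r : R}, Sp r → Sp (-r) := by
    intro r hr x
    have e : (-r) * x - x = -(r * x - x) - (x + x) := by rw [neg_mul]; abel
    rw [e]; exact Nsub (Nneg (hr x)) (two_mem x)
  have Tzero : T 0 := by intro x; rw [zero_mul]; exact Nzero
  have Ttwo : ∀ r : R, T (r + r) := by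
    intro r x
    rw [add_mul]
    exact two_mem (r * x)
  have TmulL : ∀ {r : R} (s : R), T r → T (r * s) := by
    intro r s hr x
    rw [mul_assoc]
    exact hr (s * x)
  have SpTmul : ∀ {r s : R}, Sp r → T s → T (r * s) := by
    intro r s hr hs x
    rw [mul_assoc]
    have e : r * (s * x) = (r * (s * x) - s * x) + s * x := by abel
    rw [e]; exact Nadd (hr (s * x)) (hs x)
  have TmulAny : ∀ {r : R} (s : R), T r → T (s * r) := by
    intro r s hr x
    rw [mul_assoc]
    exact NmulL s (hr x)
  have SpSpmul : ∀ {r s : R}, Sp r → Sp s → Sp (r * s) := by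
    intro r s hr hs x
    have e : r * s * x - x = (r * (s * x) - s * x) + (s * x - x) := by rw [mul_assoc]; abel
    rw [e]; exact Nadd (hr (s * x)) (hs x)
  have TnotSp : ∀ {r : R}, T r → Sp r → False := by
    intro r hT hS
    have h := Nsub (hT a) (hS a)
    rw [show r * a - (r * a - a) = a by abel] at h
    exact haB h.2.1
  -- dichotomy
  have dichot : ∀ r : R, T r ∨ Sp r := by
    intro r
    have hra : r * a ∈ A := hAl r haA
    have hrb : r * b ∈ B := hBl r hbB
    have hrz : r * (a + b) ∈ C := hCl r hzC
    have hzrw : r * (a + b) = r * a + r * b := by rw [mul_add]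
    by_cases hN : N (r * a)
    · left
      have hrbC : r * b ∈ C := by
        have h := C.sub_mem hrz hN.2.2
        rwa [show r * (a + b) - r * a = r * b by rw [hzrw]; abel] at h
      have hrbN : N (r * b) := ⟨interBC hrb hrbC, hrb, hrbC⟩
      have hrzN : N (r * (a + b)) := by rw [hzrw]; exact Nadd hN hrbN
      intro x
      rcases classify x with h | h | h | h
      · exact NmulL r h
      · have hd := NmulL r (diffA h.1 h.2.1 h.2.2)
        have e : r * x = r * (x - a) + r * a := by rw [mul_sub]; abel
        rw [e]; exact Nadd hd hN
      · have hd := NmulL r (diffB h.1 h.2.1 h.2.2)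
        have e : r * x = r * (x - b) + r * b := by rw [mul_sub]; abel
        rw [e]; exact Nadd hd hrbN
      · have hd := NmulL r (diffC h.1 h.2.1 h.2.2)
        have e : r * x = r * (x - (a + b)) + r * (a + b) := by rw [mul_sub]; abel
        rw [e]; exact Nadd hd hrzN
    · right
      have hraB : r * a ∉ B := fun h => hN ⟨hra, h, interAB hra h⟩
      have hraC : r * a ∉ C := fun h => hN ⟨hra, interAC hra h, h⟩
      have hda : N (r * a - a) := diffA hra hraB hraC
      have hrbN : ¬ N (r * b) := by
        intro h
        have h1 := C.sub_mem hrz h.2.2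
        rw [show r * (a + b) - r * b = r * a by rw [hzrw]; abel] at h1
        exact hraC h1
      have hrbA : r * b ∉ A := fun h => hrbN ⟨h, hrb, interAB h hrb⟩
      have hrbC : r * b ∉ C := fun h => hrbN ⟨interBC hrb h, hrb, h⟩
      have hdb : N (r * b - b) := diffB hrb hrbA hrbC
      have hdz : N (r * (a + b) - (a + b)) := by
        have h := Nadd hda hdb
        rwa [show r * a - a + (r * b - b) = r * (a + b) - (a + b) by rw [hzrw]; abel] at h
      intro x
      rcases classify x with h | h | h | h
      · exact Nsub (NmulL r h) h
      · have hd := diffA h.1 h.2.1 h.2.2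
        have e : r * x - x = (r * (x - a) - (x - a)) + (r * a - a) := by rw [mul_sub]; abel
        rw [e]; exact Nadd (Nsub (NmulL r hd) hd) hda
      · have hd := diffB h.1 h.2.1 h.2.2
        have e : r * x - x = (r * (x - b) - (x - b)) + (r * b - b) := by rw [mul_sub]; abel
        rw [e]; exact Nadd (Nsub (NmulL r hd) hd) hdb
      · have hd := diffC h.1 h.2.1 h.2.2
        have e : r * x - x = (r * (x - (a + b)) - (x - (a + b))) + (r * (a + b) - (a + b)) := by
          rw [mul_sub]; abel
        rw [e]; exact Nadd (Nsub (NmulL r hd) hd) hdz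
  by_cases hNcase : (∀ r : R, T r) ∨ (∀ r : R, r ∈ A ↔ T r)
  · -- the ideal is N itself
    have hNT : ∀ {g : R}, N g → T g := by
      rcases hNcase with h | h
      · exact fun {g} _ => h g
      · exact fun {g} hg => (h g).1 hg.1
    refine ⟨TwoSidedIdeal.mk' {g | N g} Nzero (fun hx hy => Nadd hx hy) (fun hx => Nneg hx)
      (fun {x y} hy => NmulL x hy) (fun {x y} hx => hNT hx y), ?_⟩
    set J := TwoSidedIdeal.mk' {g | N g} Nzero (fun hx hy => Nadd hx hy) (fun hx => Nneg hx)
      (fun {x y} hy => NmulL x hy) (fun {x y} hx => hNT hx y) with hJ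
    have key : ∀ u v : R, ((u : J.ringCon.Quotient) = (v : J.ringCon.Quotient)) ↔ N (u - v) := by
      intro u v
      rw [RingCon.eq, TwoSidedIdeal.rel_iff, hJ, TwoSidedIdeal.mem_mk']
      rfl
    have hsurj : ∀ q : J.ringCon.Quotient, ∃ r : R, (r : J.ringCon.Quotient) = q :=
      fun q => Quot.exists_rep q
    have ne1 : ((0 : R) : J.ringCon.Quotient) ≠ (a : J.ringCon.Quotient) := by
      intro h
      rw [key] at h
      rw [zero_sub] at h
      exact haB (by simpa using B.neg_mem h.2.1)
    have ne2 : ((0 : R) : J.ringCon.Quotient) ≠ (b : J.ringCon.Quotient) := by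
      intro h
      rw [key] at h
      rw [zero_sub] at h
      exact hbA (by simpa using A.neg_mem h.1)
    have ne3 : ((0 : R) : J.ringCon.Quotient) ≠ ((a + b : R) : J.ringCon.Quotient) := by
      intro h
      rw [key] at h
      rw [zero_sub] at h
      exact hzA (by simpa using A.neg_mem h.1)
    have ne4 : ((a : R) : J.ringCon.Quotient) ≠ (b : J.ringCon.Quotient) := by
      intro h
      rw [key] at h
      obtain ⟨n1, n2, n3⟩ := negPureB hbB hbA hbC
      have := sum_pure hcov haA haB haC n1 n2 n3
      rw [← sub_eq_add_neg] at this
      exact this.2.1 h.1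
    have ne5 : ((a : R) : J.ringCon.Quotient) ≠ ((a + b : R) : J.ringCon.Quotient) := by
      intro h
      rw [key] at h
      rw [show a - (a + b) = -b by abel] at h
      exact hbA (by simpa using A.neg_mem h.1)
    have ne6 : ((b : R) : J.ringCon.Quotient) ≠ ((a + b : R) : J.ringCon.Quotient) := by
      intro h
      rw [key] at h
      rw [show b - (a + b) = -a by abel] at h
      exact haB (by simpa using B.neg_mem h.2.1)
    have hall : ∀ q : J.ringCon.Quotient,
        q = ((0 : R) : J.ringCon.Quotient) ∨ q = (a : J.ringCon.Quotient) ∨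
        q = (b : J.ringCon.Quotient) ∨ q = ((a + b : R) : J.ringCon.Quotient) := by
      intro q
      obtain ⟨r, rfl⟩ := hsurj q
      rcases classify r with h | h | h | h
      · left; rw [key, sub_zero]; exact h
      · right; left; rw [key]; exact diffA h.1 h.2.1 h.2.2
      · right; right; left; rw [key]; exact diffB h.1 h.2.1 h.2.2
      · right; right; right; rw [key]; exact diffC h.1 h.2.1 h.2.2
    refine ⟨card_four ne1 ne2 ne3 ne4 ne5 ne6 hall, ?_, ?_⟩
    · intro q
      obtain ⟨r, rfl⟩ := hsurj q
      rw [← RingCon.coe_add, ← RingCon.coe_zero, key, sub_zero]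
      exact two_mem r
    rcases hNcase with hTall | hTA
    · left
      intro q q'
      obtain ⟨r, rfl⟩ := hsurj q
      obtain ⟨s, rfl⟩ := hsurj q'
      rw [← RingCon.coe_mul, ← RingCon.coe_zero, key, sub_zero]
      exact hTall r s
    · right
      have hSpb : Sp b := (dichot b).resolve_left (fun h => hbA ((hTA b).2 h))
      have hSpz : Sp (a + b) := (dichot (a + b)).resolve_left (fun h => hzA ((hTA (a + b)).2 h))
      refine ⟨(b : J.ringCon.Quotient), ((a + b : R) : J.ringCon.Quotient), ?_, ?_, ?_, ?_, ?_⟩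
      · rw [AddSubgroup.eq_top_iff']
        intro q
        have hmb : (b : J.ringCon.Quotient) ∈ AddSubgroup.closure
            {(b : J.ringCon.Quotient), ((a + b : R) : J.ringCon.Quotient)} :=
          AddSubgroup.subset_closure (Set.mem_insert _ _)
        have hmz : ((a + b : R) : J.ringCon.Quotient) ∈ AddSubgroup.closure
            {(b : J.ringCon.Quotient), ((a + b : R) : J.ringCon.Quotient)} :=
          AddSubgroup.subset_closure (Set.mem_insert_iff.mpr (Or.inr rfl))
        have hma : ((a : R) : J.ringCon.Quotient) ∈ AddSubgroup.closure
            {(b : J.ringCon.Quotient), ((a + b : R) : J.ringCon.Quotient)} := by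
          have he : ((a : R) : J.ringCon.Quotient) = ↑b + ↑(a + b) := by
            rw [← RingCon.coe_add, key]
            rw [show a - (b + (a + b)) = -(b + b) by abel]
            exact Nneg (two_mem b)
          rw [he]
          exact AddSubgroup.add_mem _ hmb hmz
        rcases hall q with h | h | h | h <;> rw [h]
        · rw [RingCon.coe_zero]; exact AddSubgroup.zero_mem _
        · exact hma
        · exact hmb
        · exact hmz
      · rw [← RingCon.coe_mul, key]; exact hSpb b
      · rw [← RingCon.coe_mul, key]; exact hSpz (a + b)
      · rw [← RingCon.coe_mul, key]; exact hSpb (a + b)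
      · rw [← RingCon.coe_mul, key]; exact hSpz b
  · -- the surjective-φ case
    push_neg at hNcase
    obtain ⟨hnT, hnIff⟩ := hNcase
    obtain ⟨s, hs⟩ := hnT
    have hSps : Sp s := (dichot s).resolve_left hs
    obtain ⟨r, hr⟩ := hnIff
    -- construct p with Sp p, p ∈ A and q with T q, q ∉ A
    obtain ⟨p, q, hSpp, hpA, hTq, hqA⟩ :
        ∃ p q : R, Sp p ∧ p ∈ A ∧ T q ∧ q ∉ A := by
      rcases hr with ⟨hrA, hTr⟩ | ⟨hrA, hTr⟩
      · have hSpr : Sp r := (dichot r).resolve_left hTr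
        by_cases hTb : T b
        · exact ⟨r, b, hSpr, hrA, hTb, hbA⟩
        · have hSpb : Sp b := (dichot b).resolve_left hTb
          refine ⟨r, b - r, hSpr, hrA, ?_, ?_⟩
          · rw [sub_eq_add_neg]
            exact SpSp hSpb (Spneg hSpr)
          · intro h
            have h2 := A.add_mem h hrA
            rw [sub_add_cancel] at h2
            exact hbA h2
      · by_cases hsA : s ∈ A
        · exact ⟨s, r, hSps, hsA, hTr, hrA⟩
        · refine ⟨s - r, r, ?_, index2A hsA hrA, hTr, hrA⟩
          rw [sub_eq_add_neg]
          exact SpT hSps (Tneg hTr)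
    have hSppq : Sp (p + q) := SpT hSpp hTq
    have hpqA : p + q ∉ A := fun h => hqA (by
      have h2 := A.sub_mem h hpA
      rwa [add_sub_cancel_left] at h2)
    refine ⟨TwoSidedIdeal.mk' {g | T g ∧ g ∈ A} ⟨Tzero, A.zero_mem⟩
      (fun hx hy => ⟨Tadd hx.1 hy.1, A.add_mem hx.2 hy.2⟩)
      (fun hx => ⟨Tneg hx.1, A.neg_mem hx.2⟩)
      (fun {x y} hy => ⟨TmulAny x hy.1, hAl x hy.2⟩)
      (fun {x y} hx => ⟨TmulL y hx.1, (hx.1 y).1⟩), ?_⟩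
    set J := TwoSidedIdeal.mk' {g | T g ∧ g ∈ A} ⟨Tzero, A.zero_mem⟩
      (fun hx hy => ⟨Tadd hx.1 hy.1, A.add_mem hx.2 hy.2⟩)
      (fun hx => ⟨Tneg hx.1, A.neg_mem hx.2⟩)
      (fun {x y} hy => ⟨TmulAny x hy.1, hAl x hy.2⟩)
      (fun {x y} hx => ⟨TmulL y hx.1, (hx.1 y).1⟩) with hJ
    have key : ∀ u v : R, ((u : J.ringCon.Quotient) = (v : J.ringCon.Quotient)) ↔
        (T (u - v) ∧ u - v ∈ A) := by
      intro u v
      rw [RingCon.eq, TwoSidedIdeal.rel_iff, hJ, TwoSidedIdeal.mem_mk']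
      rfl
    have hsurj : ∀ q : J.ringCon.Quotient, ∃ r : R, (r : J.ringCon.Quotient) = q :=
      fun q => Quot.exists_rep q
    have Tof_neg : ∀ {g : R}, T (-g) → T g := by
      intro g h
      have h2 := Tneg h
      rwa [neg_neg] at h2
    have ne1 : ((0 : R) : J.ringCon.Quotient) ≠ (p : J.ringCon.Quotient) := by
      intro h
      rw [key, zero_sub] at h
      exact TnotSp (Tof_neg h.1) hSpp
    have ne2 : ((0 : R) : J.ringCon.Quotient) ≠ (q : J.ringCon.Quotient) := by
      intro h
      rw [key, zero_sub] at h
      exact hqA (by simpa using A.neg_mem h.2)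
    have ne3 : ((0 : R) : J.ringCon.Quotient) ≠ ((p + q : R) : J.ringCon.Quotient) := by
      intro h
      rw [key, zero_sub] at h
      exact hpqA (by simpa using A.neg_mem h.2)
    have ne4 : ((p : R) : J.ringCon.Quotient) ≠ (q : J.ringCon.Quotient) := by
      intro h
      rw [key] at h
      have h2 := A.sub_mem hpA h.2
      rw [show p - (p - q) = q by abel] at h2
      exact hqA h2
    have ne5 : ((p : R) : J.ringCon.Quotient) ≠ ((p + q : R) : J.ringCon.Quotient) := by
      intro h
      rw [key, show p - (p + q) = -q by abel] at h
      exact hqA (by simpa using A.neg_mem h.2)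
    have ne6 : ((q : R) : J.ringCon.Quotient) ≠ ((p + q : R) : J.ringCon.Quotient) := by
      intro h
      rw [key, show q - (p + q) = -p by abel] at h
      exact TnotSp (Tof_neg h.1) hSpp
    have hall : ∀ g : J.ringCon.Quotient,
        g = ((0 : R) : J.ringCon.Quotient) ∨ g = (p : J.ringCon.Quotient) ∨
        g = (q : J.ringCon.Quotient) ∨ g = ((p + q : R) : J.ringCon.Quotient) := by
      intro g
      obtain ⟨w, rfl⟩ := hsurj g
      rcases dichot w with hTw | hSpw
      · by_cases hwA : w ∈ A
        · left; rw [key, sub_zero]; exact ⟨hTw, hwA⟩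
        · right; right; left
          rw [key, sub_eq_add_neg]
          exact ⟨Tadd hTw (Tneg hTq), by rw [← sub_eq_add_neg]; exact index2A hwA hqA⟩
      · by_cases hwA : w ∈ A
        · right; left
          rw [key, sub_eq_add_neg]
          exact ⟨SpSp hSpw (Spneg hSpp), by rw [← sub_eq_add_neg]; exact A.sub_mem hwA hpA⟩
        · right; right; right
          rw [key, sub_eq_add_neg]
          exact ⟨SpSp hSpw (Spneg hSppq), by rw [← sub_eq_add_neg]; exact index2A hwA hpqA⟩
    refine ⟨card_four ne1 ne2 ne3 ne4 ne5 ne6 hall, ?_, ?_⟩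
    · intro g
      obtain ⟨w, rfl⟩ := hsurj g
      rw [← RingCon.coe_add, ← RingCon.coe_zero, key, sub_zero]
      exact ⟨Ttwo w, (two_mem w).1⟩
    right
    refine ⟨(p : J.ringCon.Quotient), ((p + q : R) : J.ringCon.Quotient), ?_, ?_, ?_, ?_, ?_⟩
    · rw [AddSubgroup.eq_top_iff']
      intro g
      have hmp : (p : J.ringCon.Quotient) ∈ AddSubgroup.closure
          {(p : J.ringCon.Quotient), ((p + q : R) : J.ringCon.Quotient)} :=
        AddSubgroup.subset_closure (Set.mem_insert _ _)
      have hmpq : ((p + q : R) : J.ringCon.Quotient) ∈ AddSubgroup.closure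
          {(p : J.ringCon.Quotient), ((p + q : R) : J.ringCon.Quotient)} :=
        AddSubgroup.subset_closure (Set.mem_insert_iff.mpr (Or.inr rfl))
      have hmq : ((q : R) : J.ringCon.Quotient) ∈ AddSubgroup.closure
          {(p : J.ringCon.Quotient), ((p + q : R) : J.ringCon.Quotient)} := by
        have he : ((q : R) : J.ringCon.Quotient) = ↑p + ↑(p + q) := by
          rw [← RingCon.coe_add, key, show q - (p + (p + q)) = -(p + p) by abel]
          exact ⟨Tneg (Ttwo p), A.neg_mem (two_mem p).1⟩
        rw [he]
        exact AddSubgroup.add_mem _ hmp hmpq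
      rcases hall g with h | h | h | h <;> rw [h]
      · rw [RingCon.coe_zero]; exact AddSubgroup.zero_mem _
      · exact hmp
      · exact hmq
      · exact hmpq
    · rw [← RingCon.coe_mul, key]
      constructor
      · rw [sub_eq_add_neg]; exact SpSp (SpSpmul hSpp hSpp) (Spneg hSpp)
      · exact A.sub_mem (hAl p hpA) hpA
    · rw [← RingCon.coe_mul, key]
      constructor
      · rw [sub_eq_add_neg]; exact SpSp (SpSpmul hSppq hSppq) (Spneg hSppq)
      · have e : (p + q) * (p + q) - (p + q) = (p * (p + q) - (p + q)) + q * (p + q) := by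
          rw [add_mul]; abel
        rw [e]
        exact A.add_mem (hSpp (p + q)).1 (hTq (p + q)).1
    · rw [← RingCon.coe_mul, key]
      constructor
      · rw [sub_eq_add_neg]; exact SpSp (SpSpmul hSpp hSppq) (Spneg hSppq)
      · exact (hSpp (p + q)).1
    · rw [← RingCon.coe_mul, key]
      constructor
      · rw [sub_eq_add_neg]; exact SpSp (SpSpmul hSppq hSpp) (Spneg hSpp)
      · exact (hSppq p).1

lemma backward_aux (I : TwoSidedIdeal R)
    (hcard : Nat.card I.ringCon.Quotient = 4)
    (hchar : ∀ x : I.ringCon.Quotient, x + x = 0)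
    (u v : I.ringCon.Quotient) (hu0 : u ≠ 0) (hv0 : v ≠ 0) (huv : u ≠ v)
    (hmu : ∀ q : I.ringCon.Quotient, q * u = 0 ∨ q * u = u)
    (hmv : ∀ q : I.ringCon.Quotient, q * v = 0 ∨ q * v = v)
    (hmw : ∀ q : I.ringCon.Quotient, q * (u + v) = 0 ∨ q * (u + v) = u + v) :
    ∃ f : Fin 3 → AddSubgroup R,
      (∀ i, (∀ (r : R) ⦃x : R⦄, x ∈ f i → r * x ∈ f i) ∧ f i ≠ ⊤) ∧ ∀ x : R, ∃ i, x ∈ f i := by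
  classical
  have hneg : ∀ t : I.ringCon.Quotient, -t = t := fun t => neg_eq_of_add_eq_zero_left (hchar t)
  have hw0 : u + v ≠ 0 := by
    intro h
    have h2 : v = -u := eq_neg_of_add_eq_zero_right h
    rw [hneg] at h2
    exact huv h2.symm
  have huw : u ≠ u + v := by
    intro h
    have h2 : v = 0 := by rw [← add_sub_cancel_left u v, ← h, sub_self]
    exact hv0 h2
  have hvw : v ≠ u + v := by
    intro h
    have h2 : u = 0 := by rw [← add_sub_cancel_right u v, ← h, sub_self]
    exact hu0 h2
  have hall := four_cover hcard (Ne.symm hu0) (Ne.symm hv0) (Ne.symm hw0) huv huw hvw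
  have hsurj : ∀ q : I.ringCon.Quotient, ∃ r : R, (r : I.ringCon.Quotient) = q := fun q => Quot.exists_rep q
  let coeHom : R →+ I.ringCon.Quotient := AddMonoidHom.mk' (fun r => (r : I.ringCon.Quotient)) (fun x y => RingCon.coe_add _ x y)
  have hli : ∀ (P : AddSubgroup I.ringCon.Quotient), (∀ q g : I.ringCon.Quotient, g ∈ P → q * g ∈ P) →
      ∀ (r : R) ⦃x : R⦄, x ∈ P.comap coeHom → r * x ∈ P.comap coeHom := by
    intro P hP r x hx
    have h2 : ((r * x : R) : I.ringCon.Quotient) ∈ P := by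
      rw [RingCon.coe_mul]
      exact hP _ _ hx
    exact h2
  have hne : ∀ (P : AddSubgroup I.ringCon.Quotient) (q : I.ringCon.Quotient), q ∉ P → P.comap coeHom ≠ ⊤ := by
    intro P q hq htop
    obtain ⟨r, rfl⟩ := hsurj q
    have h2 : r ∈ P.comap coeHom := by rw [htop]; exact AddSubgroup.mem_top r
    exact hq h2
  have hmem : ∀ (x : I.ringCon.Quotient) (hx : x + x = 0) (g : I.ringCon.Quotient), g ∈ pairSub x hx ↔ g = 0 ∨ g = x :=
    fun x hx g => Iff.rfl
  have h0 : ∀ q g : I.ringCon.Quotient, g ∈ pairSub u (hchar u) → q * g ∈ pairSub u (hchar u) := by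
    intro q g hg
    rcases (hmem u (hchar u) g).1 hg with h | h <;> rw [h]
    · exact (hmem u (hchar u) _).2 (Or.inl (mul_zero q))
    · exact (hmem u (hchar u) _).2 (hmu q)
  have h1 : ∀ q g : I.ringCon.Quotient, g ∈ pairSub v (hchar v) → q * g ∈ pairSub v (hchar v) := by
    intro q g hg
    rcases (hmem v (hchar v) g).1 hg with h | h <;> rw [h]
    · exact (hmem v (hchar v) _).2 (Or.inl (mul_zero q))
    · exact (hmem v (hchar v) _).2 (hmv q)
  have h2 : ∀ q g : I.ringCon.Quotient, g ∈ pairSub (u + v) (hchar (u + v)) → q * g ∈ pairSub (u + v) (hchar (u + v)) := by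
    intro q g hg
    rcases (hmem (u + v) (hchar (u + v)) g).1 hg with h | h <;> rw [h]
    · exact (hmem (u + v) (hchar (u + v)) _).2 (Or.inl (mul_zero q))
    · exact (hmem (u + v) (hchar (u + v)) _).2 (hmw q)
  have hn0 : v ∉ pairSub u (hchar u) := by
    rw [hmem]
    rintro (h | h)
    exacts [hv0 h, huv h.symm]
  have hn1 : u ∉ pairSub v (hchar v) := by
    rw [hmem]
    rintro (h | h)
    exacts [hu0 h, huv h]
  have hn2 : u ∉ pairSub (u + v) (hchar (u + v)) := by
    rw [hmem]
    rintro (h | h)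
    exacts [hu0 h, huw h]
  refine ⟨![(pairSub u (hchar u)).comap coeHom, (pairSub v (hchar v)).comap coeHom,
    (pairSub (u + v) (hchar (u + v))).comap coeHom], fun i => ?_, fun x => ?_⟩
  · fin_cases i
    · exact ⟨hli _ h0, hne _ v hn0⟩
    · exact ⟨hli _ h1, hne _ u hn1⟩
    · exact ⟨hli _ h2, hne _ u hn2⟩
  · rcases hall (x : I.ringCon.Quotient) with h | h | h | h
    · exact ⟨0, show coeHom x ∈ pairSub u (hchar u) from (hmem u (hchar u) _).2 (Or.inl h)⟩
    · exact ⟨0, show coeHom x ∈ pairSub u (hchar u) from (hmem u (hchar u) _).2 (Or.inr h)⟩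
    · exact ⟨1, show coeHom x ∈ pairSub v (hchar v) from (hmem v (hchar v) _).2 (Or.inr h)⟩
    · exact ⟨2, show coeHom x ∈ pairSub (u + v) (hchar (u + v)) from
        (hmem (u + v) (hchar (u + v)) _).2 (Or.inr h)⟩

lemma backward (I : TwoSidedIdeal R)
    (hcard : Nat.card I.ringCon.Quotient = 4)
    (hchar : ∀ x : I.ringCon.Quotient, x + x = 0)
    (hmul : (∀ x y : I.ringCon.Quotient, x * y = 0) ∨
      ∃ a b : I.ringCon.Quotient, AddSubgroup.closure {a, b} = ⊤ ∧
        a * a = a ∧ b * b = b ∧ a * b = b ∧ b * a = a) :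
    ∃ f : Fin 3 → AddSubgroup R,
      (∀ i, (∀ (r : R) ⦃x : R⦄, x ∈ f i → r * x ∈ f i) ∧ f i ≠ ⊤) ∧ ∀ x : R, ∃ i, x ∈ f i := by
  classical
  rcases hmul with hzero | ⟨a, b, hcl, haa, hbb, hab, hba⟩
  · -- zero multiplication : find u ≠ 0 and v ∉ {0, u}
    have h1 : ∃ u : I.ringCon.Quotient, u ≠ 0 := by
      by_contra h
      push_neg at h
      have := card_le_two (u := (0 : I.ringCon.Quotient)) (v := 0) (fun q => Or.inl (h q))
      omega
    obtain ⟨u, hu0⟩ := h1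
    have h2 : ∃ v : I.ringCon.Quotient, v ≠ 0 ∧ v ≠ u := by
      by_contra h
      push_neg at h
      have := card_le_two (u := (0 : I.ringCon.Quotient)) (v := u) (fun q => by
        by_cases hq : q = 0
        · exact Or.inl hq
        · exact Or.inr (h q hq))
      omega
    obtain ⟨v, hv0, hvu⟩ := h2
    exact backward_aux I hcard hchar u v hu0 hv0 (Ne.symm hvu)
      (fun q => Or.inl (hzero q u)) (fun q => Or.inl (hzero q v))
      (fun q => Or.inl (hzero q (u + v)))
  · -- the ring E case
    have hneg : ∀ t : I.ringCon.Quotient, -t = t := fun t => neg_eq_of_add_eq_zero_left (hchar t)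
    have hsmall : ∀ (d : I.ringCon.Quotient) (hd : d + d = 0),
        a ∈ pairSub d hd → b ∈ pairSub d hd → False := by
      intro d hd hda hdb
      have hle : (⊤ : AddSubgroup I.ringCon.Quotient) ≤ pairSub d hd := by
        rw [← hcl]
        refine (AddSubgroup.closure_le _).2 ?_
        rintro t ht
        rcases ht with rfl | rfl
        · exact hda
        · exact hdb
      have hall2 : ∀ q : I.ringCon.Quotient, q = 0 ∨ q = d :=
        fun q => hle (AddSubgroup.mem_top q)
      have := card_le_two hall2
      omega
    have ha0 : a ≠ 0 := by
      intro h
      exact hsmall b (hchar b) (Or.inl h) (Or.inr rfl)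
    have hb0 : b ≠ 0 := by
      intro h
      exact hsmall a (hchar a) (Or.inr rfl) (Or.inl h)
    have hab2 : a ≠ b := by
      intro h
      exact hsmall b (hchar b) (Or.inr h) (Or.inr rfl)
    have hw0 : a + b ≠ 0 := by
      intro h
      have h2 : b = -a := eq_neg_of_add_eq_zero_right h
      rw [hneg] at h2
      exact hab2 h2.symm
    have haw : a ≠ a + b := by
      intro h
      exact hb0 (by rw [← add_sub_cancel_left a b, ← h, sub_self])
    have hbw : b ≠ a + b := by
      intro h
      exact ha0 (by rw [← add_sub_cancel_right a b, ← h, sub_self])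
    have hall := four_cover hcard (Ne.symm ha0) (Ne.symm hb0) (Ne.symm hw0) hab2 haw hbw
    have hmu : ∀ q : I.ringCon.Quotient, q * a = 0 ∨ q * a = a := by
      intro q
      rcases hall q with h | h | h | h <;> rw [h]
      · exact Or.inl (zero_mul a)
      · exact Or.inr haa
      · exact Or.inr hba
      · left; rw [add_mul, haa, hba]; exact hchar a
    have hmv : ∀ q : I.ringCon.Quotient, q * b = 0 ∨ q * b = b := by
      intro q
      rcases hall q with h | h | h | h <;> rw [h]
      · exact Or.inl (zero_mul b)
      · exact Or.inr hab
      · exact Or.inr hbb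
      · left; rw [add_mul, hab, hbb]; exact hchar b
    have hmw : ∀ q : I.ringCon.Quotient, q * (a + b) = 0 ∨ q * (a + b) = a + b := by
      intro q
      rcases hall q with h | h | h | h <;> rw [h]
      · exact Or.inl (zero_mul (a + b))
      · right; rw [mul_add, haa, hab]
      · right; rw [mul_add, hba, hbb]
      · left; rw [add_mul, mul_add, mul_add, haa, hab, hba, hbb]; exact hchar (a + b)
    exact backward_aux I hcard hchar a b ha0 hb0 hab2 hmu hmv hmw

end LICN

/-- A ring has left ideal covering number exactly 3 if and only if it has a factor
ring of order 4 with elementary abelian additive group which either has zero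
multiplication, or is generated by elements `a, b` with
`a² = a, b² = b, ab = b, ba = a`. -/
theorem left_ideal_covering_number_eq_three (R : Type*) [NonUnitalRing R] :
    ((∃ f : Fin 3 → AddSubgroup R,
        (∀ i, IsLeftIdeal (f i) ∧ f i ≠ ⊤) ∧ ∀ x : R, ∃ i, x ∈ f i) ∧
      ¬ ∃ f : Fin 2 → AddSubgroup R,
        (∀ i, IsLeftIdeal (f i) ∧ f i ≠ ⊤) ∧ ∀ x : R, ∃ i, x ∈ f i) ↔
    ∃ I : TwoSidedIdeal R,
      Nat.card I.ringCon.Quotient = 4 ∧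
      (∀ x : I.ringCon.Quotient, x + x = 0) ∧
      ((∀ x y : I.ringCon.Quotient, x * y = 0) ∨
        ∃ a b : I.ringCon.Quotient, AddSubgroup.closure {a, b} = ⊤ ∧
          a * a = a ∧ b * b = b ∧ a * b = b ∧ b * a = a) := by
  constructor
  · rintro ⟨⟨f, hf, hcov⟩, hn2⟩
    have hcov3 : ∀ g : R, g ∈ f 0 ∨ g ∈ f 1 ∨ g ∈ f 2 := by
      intro g
      obtain ⟨i, hi⟩ := hcov g
      fin_cases i
      · exact Or.inl hi
      · exact Or.inr (Or.inl hi)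
      · exact Or.inr (Or.inr hi)
    have hBC : ∃ x : R, x ∉ f 1 ∧ x ∉ f 2 := by
      by_contra h
      push_neg at h
      refine hn2 ⟨![f 1, f 2], fun i => ?_, fun x => ?_⟩
      · fin_cases i
        · exact hf 1
        · exact hf 2
      · by_cases hx : x ∈ f 1
        · exact ⟨0, hx⟩
        · exact ⟨1, h x hx⟩
    have hAC : ∃ x : R, x ∉ f 0 ∧ x ∉ f 2 := by
      by_contra h
      push_neg at h
      refine hn2 ⟨![f 0, f 2], fun i => ?_, fun x => ?_⟩
      · fin_cases i
        · exact hf 0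
        · exact hf 2
      · by_cases hx : x ∈ f 0
        · exact ⟨0, hx⟩
        · exact ⟨1, h x hx⟩
    obtain ⟨a, haB, haC⟩ := hBC
    obtain ⟨b, hbA, hbC⟩ := hAC
    have haA : a ∈ f 0 := by
      rcases hcov3 a with h | h | h
      · exact h
      · exact absurd h haB
      · exact absurd h haC
    have hbB : b ∈ f 1 := by
      rcases hcov3 b with h | h | h
      · exact absurd h hbA
      · exact h
      · exact absurd h hbC
    exact LICN.forward (hf 0).1 (hf 1).1 (hf 2).1 hcov3 haA haB haC hbB hbA hbC
  · rintro ⟨I, h1, h2, h3⟩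
    exact ⟨LICN.backward I h1 h2 h3, LICN.no_two_cover⟩
end
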